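/- arXiv:0712.4124 — 7 statements merged into one kernel-verified Lean document; each statement's English description precedes it below -/
import Mathlib

section
/- (Cyclic Vector Theorem) Let (k, ∂) be a differential field of characteristic zero containing an element a with ∂a ≠ 0. Let M be a k-vector space of finite dimension n ≥ 1 equipped with an additive map D : M → M satisfying D(f·m) = ∂(f)·m + f·D(m) for all f ∈ k, m ∈ M. Then there exists m ∈ M such that m, D(m), D²(m), …, D^{n−1}(m) form a k-basis of M. -/
namespace CyclicVectorAux

open Finset

section Der
variable {k : Type*} [Field k] (d : k → k)
  (hadd : ∀ a b : k, d (a + b) = d a + d b)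
  (hmul : ∀ a b : k, d (a * b) = d a * b + a * d b)

include hadd in
lemma d_zero : d 0 = 0 := by
  have := hadd 0 0; simpa using this.symm

include hadd hmul in
lemma d_one : d 1 = 0 := by
  have h := hmul 1 1
  simp at h
  exact h

include hadd hmul in
lemma d_natCast (n : ℕ) : d (n : k) = 0 := by
  induction n with
  | zero => simpa using d_zero d hadd
  | succ n ih => rw [Nat.cast_succ, hadd, ih, d_one d hadd hmul, add_zero]

include hadd in
lemma d_neg (x : k) : d (-x) = - d x := by
  have h := hadd x (-x)
  rw [add_neg_cancel, d_zero d hadd] at h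
  linear_combination -h

include hadd hmul in
lemma d_intCast (n : ℤ) : d (n : k) = 0 := by
  rcases n with n | n
  · simpa using d_natCast d hadd hmul n
  · rw [Int.cast_negSucc, d_neg d hadd, d_natCast d hadd hmul, neg_zero]

include hadd hmul in
lemma d_ratCast [CharZero k] (q : ℚ) : d (q : k) = 0 := by
  have hden : ((q.den : k)) ≠ 0 := by exact_mod_cast (Nat.cast_ne_zero (R := k)).2 q.den_nz
  have h1 : (q.den : k) * (q : k) = ((q.num : ℤ) : k) := by
    rw [Rat.cast_def]; field_simp
  have h2 := hmul (q.den : k) (q : k)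
  rw [h1, d_intCast d hadd hmul, d_natCast d hadd hmul] at h2
  have : (q.den : k) * d (q : k) = 0 := by linear_combination -h2
  rcases mul_eq_zero.1 this with h | h
  · exact absurd h hden
  · exact h

include hadd in
lemma d_iter_add (j : ℕ) (x y : k) : d^[j] (x + y) = d^[j] x + d^[j] y := by
  induction j generalizing x y with
  | zero => simp
  | succ j ih =>
    simp only [Function.iterate_succ_apply]
    rw [hadd, ih]

include hadd hmul in
lemma d_iter_const_mul (c : k) (hc : d c = 0) (j : ℕ) (x : k) :
    d^[j] (c * x) = c * d^[j] x := by
  induction j generalizing x with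
  | zero => simp
  | succ j ih =>
    simp only [Function.iterate_succ_apply]
    rw [hmul, hc, zero_mul, zero_add, ih]

include hadd hmul in
lemma d_pow (t : k) (ht : d t = 1) (m : ℕ) : d (t ^ m) = m * t ^ (m - 1) := by
  induction m with
  | zero => simpa using d_one d hadd hmul
  | succ m ih =>
    rw [pow_succ, hmul, ih, ht, mul_one, Nat.add_sub_cancel]
    rcases Nat.eq_zero_or_pos m with hm | hm
    · subst hm; simp
    · have h1 : t ^ (m - 1) * t = t ^ m := by
        rw [← pow_succ]; congr 1; omega
      push_cast
      linear_combination (m : k) * h1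

include hadd hmul in
lemma d_iter_pow (t : k) (ht : d t = 1) (s j : ℕ) :
    d^[j] (t ^ s) = (s.descFactorial j : k) * t ^ (s - j) := by
  induction j with
  | zero => simp
  | succ j ih =>
    rw [Function.iterate_succ_apply', ih, hmul, d_natCast d hadd hmul, zero_mul, zero_add,
      d_pow d hadd hmul t ht, Nat.descFactorial_succ]
    have h2 : s - j - 1 = s - (j + 1) := by omega
    push_cast
    rw [h2]
    ring

end Der



section Mod
variable {k : Type*} [Field k] (d : k → k)
  (hadd : ∀ a b : k, d (a + b) = d a + d b)
  (hmul : ∀ a b : k, d (a * b) = d a * b + a * d b)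
  {M : Type*} [AddCommGroup M] [Module k M] (D : M → M)
  (hDadd : ∀ x y : M, D (x + y) = D x + D y)
  (hLeibniz : ∀ (f : k) (m : M), D (f • m) = d f • m + f • D m)

include hDadd in
lemma D_iter_add (i : ℕ) (x y : M) : D^[i] (x + y) = D^[i] x + D^[i] y := by
  induction i generalizing x y with
  | zero => simp
  | succ i ih =>
    simp only [Function.iterate_succ_apply]
    rw [hDadd, ih]

include hDadd in
lemma D_sum {ι : Type*} (s : Finset ι) (f : ι → M) :
    D (∑ i ∈ s, f i) = ∑ i ∈ s, D (f i) :=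
  map_sum (AddMonoidHom.mk' D hDadd) f s

-- d of a natural-cast constant times x
include hadd hmul in
private lemma d_nat_mul (c : ℕ) (x : k) : d ((c : k) * x) = (c : k) * d x := by
  rw [hmul, d_natCast d hadd hmul, zero_mul, zero_add]

include hadd hmul hDadd hLeibniz in
lemma D_iter_smul (i : ℕ) (f : k) (y : M) :
    D^[i] (f • y) = ∑ j ∈ Finset.range (i + 1),
      (((i.choose j : ℕ) : k) * d^[j] f) • D^[i - j] y := by
  induction i with
  | zero => simp
  | succ i ih =>
    rw [Function.iterate_succ_apply', ih, D_sum D hDadd]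
    have hterm : ∀ j ∈ Finset.range (i + 1),
        D ((((i.choose j : ℕ) : k) * d^[j] f) • D^[i - j] y)
          = (((i.choose j : ℕ) : k) * d^[j + 1] f) • D^[i - j] y
            + (((i.choose j : ℕ) : k) * d^[j] f) • D^[i + 1 - j] y := by
      intro j hj
      rw [Finset.mem_range] at hj
      have hj' : j ≤ i := by omega
      rw [hLeibniz, d_nat_mul d hadd hmul, ← Function.iterate_succ_apply' d]
      congr 2
      rw [← Function.iterate_succ_apply' D]
      congr 1
      omega
    rw [Finset.sum_congr rfl hterm, Finset.sum_add_distrib]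
    -- name the pieces
    set A := ∑ j ∈ Finset.range (i + 1),
      (((i.choose j : ℕ) : k) * d^[j + 1] f) • D^[i - j] y with hA
    set B := ∑ j ∈ Finset.range (i + 1),
      (((i.choose j : ℕ) : k) * d^[j] f) • D^[i + 1 - j] y with hB
    -- target sum
    have hT : ∑ j ∈ Finset.range (i + 2),
        ((((i+1).choose j : ℕ) : k) * d^[j] f) • D^[i + 1 - j] y = A + B := by
      rw [Finset.sum_range_succ' _ (i + 1)]
      have h0 : ((((i+1).choose 0 : ℕ) : k) * d^[0] f) • D^[i + 1 - 0] y
          = f • D^[i + 1] y := by simp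
      have hsplit : ∀ j ∈ Finset.range (i + 1),
          ((((i+1).choose (j+1) : ℕ) : k) * d^[j+1] f) • D^[i + 1 - (j+1)] y
            = (((i.choose j : ℕ) : k) * d^[j + 1] f) • D^[i - j] y
              + (((i.choose (j+1) : ℕ) : k) * d^[j+1] f) • D^[i - j] y := by
        intro j hj
        have : i + 1 - (j + 1) = i - j := by omega
        rw [this, Nat.choose_succ_succ]
        push_cast
        rw [add_mul, add_smul]
      rw [Finset.sum_congr rfl hsplit, Finset.sum_add_distrib, h0]
      -- now : A + (∑ C(i,j+1)-terms) + f • D^[i+1] y = A + B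
      have hBalt : B = (∑ j ∈ Finset.range i,
          (((i.choose (j+1) : ℕ) : k) * d^[j+1] f) • D^[i - j] y) + f • D^[i+1] y := by
        rw [hB, Finset.sum_range_succ' _ i]
        congr 1
        · apply Finset.sum_congr rfl
          intro j hj
          have : i + 1 - (j + 1) = i - j := by omega
          rw [this]
        · simp
      rw [hBalt]
      have hzero : (∑ j ∈ Finset.range (i+1),
          (((i.choose (j+1) : ℕ) : k) * d^[j+1] f) • D^[i - j] y)
          = ∑ j ∈ Finset.range i,
          (((i.choose (j+1) : ℕ) : k) * d^[j+1] f) • D^[i - j] y := by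
        rw [Finset.sum_range_succ]
        simp [Nat.choose_succ_self]
      rw [hzero]
      abel
    exact hT.symm

end Mod


section Main
open Module
variable {k : Type*} [Field k] [CharZero k]

theorem exists_independent (d : k → k)
    (hadd : ∀ a b : k, d (a + b) = d a + d b)
    (hmul : ∀ a b : k, d (a * b) = d a * b + a * d b)
    (t : k) (ht : d t = 1)
    (M : Type*) [AddCommGroup M] [Module k M] [FiniteDimensional k M]
    (D : M → M)
    (hDadd : ∀ x y : M, D (x + y) = D x + D y)
    (hLeibniz : ∀ (f : k) (m : M), D (f • m) = d f • m + f • D m) :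
    ∃ m : M, LinearIndependent k (fun i : Fin (finrank k M) => D^[(i : ℕ)] m) := by
  classical
  set N := finrank k M with hN
  set P : ℕ → Prop := fun r => ∃ m : M, LinearIndependent k (fun i : Fin r => D^[(i : ℕ)] m)
    with hP
  have hP0 : P 0 := ⟨0, linearIndependent_empty_type⟩
  set r := Nat.findGreatest P N with hr
  have hrP : P r := Nat.findGreatest_spec (Nat.zero_le N) hP0
  by_cases hrN : r = N
  · rw [← hrN]; exact hrP
  have hrlt : r < N := lt_of_le_of_ne (Nat.findGreatest_le N) hrN
  exfalso
  have hdep : ∀ v : M, ¬ LinearIndependent k (fun i : Fin (r + 1) => D^[(i : ℕ)] v) := by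
    intro v hv
    exact Nat.findGreatest_is_greatest (Nat.lt_succ_self r) (by omega) ⟨v, hv⟩
  obtain ⟨m, hm⟩ := hrP
  set u : Fin r → M := fun i => D^[(i : ℕ)] m with hu
  -- find y outside the span of u
  have hy : ∃ y : M, y ∉ Submodule.span k (Set.range u) := by
    by_contra h
    push_neg at h
    have htop : Submodule.span k (Set.range u) = ⊤ := Submodule.eq_top_iff'.2 h
    have : finrank k (Submodule.span k (Set.range u)) = r := by
      rw [finrank_span_eq_card hm, Fintype.card_fin]
    rw [htop, finrank_top] at this
    omega
  obtain ⟨y, hy⟩ := hy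
  set w : Fin (r + 1) → M := Fin.snoc u y with hw
  have hwind : LinearIndependent k w := linearIndependent_fin_snoc.2 ⟨hm, hy⟩
  -- build the alternating form
  obtain ⟨φ, hφw⟩ : ∃ φ : M [⋀^Fin (r+1)]→ₗ[k] k, φ w = 1 := by
    set fw : (Fin (r+1) → k) →ₗ[k] M := Fintype.linearCombination k w with hfw
    have hker : LinearMap.ker fw = ⊥ := by
      rw [LinearMap.ker_eq_bot']
      intro c hc
      rw [hfw, Fintype.linearCombination_apply] at hc
      funext i
      exact Fintype.linearIndependent_iff.1 hwind c hc i
    obtain ⟨g, hg⟩ := fw.exists_leftInverse_of_injective hker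
    have hgw : ∀ i, g (w i) = Pi.single i 1 := by
      intro i
      have h1 : fw (Pi.single i 1) = w i := by
        rw [hfw, Fintype.linearCombination_apply]
        rw [Finset.sum_eq_single i] <;> simp +contextual [Pi.single_apply]
      calc g (w i) = g (fw (Pi.single i 1)) := by rw [h1]
        _ = Pi.single i 1 := by
            have := LinearMap.congr_fun hg (Pi.single i (1:k))
            simpa using this
    refine ⟨(Matrix.detRowAlternating).compLinearMap g, ?_⟩
    rw [AlternatingMap.compLinearMap_apply]
    have heq : (fun i => g (w i)) = fun i => Pi.single i (1:k) := funext hgw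
    rw [heq]
    have hid : Matrix.of (fun i => Pi.single i (1:k)) = (1 : Matrix (Fin (r+1)) (Fin (r+1)) k) := by
      ext i j
      simp [Matrix.one_apply, Pi.single_apply, eq_comm]
    show (Matrix.of fun i => Pi.single i (1:k)).det = 1
    rw [hid, Matrix.det_one]
  -- the families
  set u' : Fin (r+1) → M := fun i => D^[(i : ℕ)] m with hu'
  set S : Fin (r+1) → k → M := fun i lam => ∑ j ∈ Finset.range ((i:ℕ)+1),
      ((((i:ℕ).choose j : ℕ) : k) * d^[j] lam) • D^[(i:ℕ)-j] y with hS
  have key0 : ∀ μ : k, φ (fun i => u' i + S i μ) = 0 := by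
    intro μ
    have hfun : (fun i : Fin (r+1) => u' i + S i μ)
        = fun i : Fin (r+1) => D^[(i:ℕ)] (m + μ • y) := by
      funext i
      rw [D_iter_add D hDadd, D_iter_smul d hadd hmul D hDadd hLeibniz]
    rw [hfun]
    exact φ.map_linearDependent _ (hdep _)
  -- scalar-linearity of S
  have hSsmul : ∀ (c : k), d c = 0 → ∀ (lam : k) (i : Fin (r+1)),
      S i (c * lam) = c • S i lam := by
    intro c hc lam i
    rw [hS]
    simp only
    rw [Finset.smul_sum]
    apply Finset.sum_congr rfl
    intro j _
    rw [d_iter_const_mul d hadd hmul c hc, smul_smul]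
    ring_nf
  -- step: coefficient extraction, degree 1 part
  have hB1 : ∀ lam : k, (∑ i : Fin (r+1), φ (Function.update u' i (S i lam))) = 0 := by
    intro lam
    set a : Finset (Fin (r+1)) → k := fun s => φ (s.piecewise (fun i => S i lam) u') with ha
    set p : Polynomial k := ∑ s : Finset (Fin (r+1)), Polynomial.C (a s) * Polynomial.X ^ s.card
      with hp
    have heval : ∀ c : k, d c = 0 → p.eval c = 0 := by
      intro c hc
      have h1 : p.eval c = ∑ s : Finset (Fin (r+1)), a s * c ^ s.card := by
        rw [hp, Polynomial.eval_finset_sum]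
        simp
      have h2 : φ (fun i => u' i + c • S i lam) = ∑ s : Finset (Fin (r+1)), a s * c ^ s.card := by
        have hadd' : (fun i : Fin (r+1) => u' i + c • S i lam)
            = (fun i : Fin (r+1) => c • S i lam) + u' := by
          funext i; simp [add_comm]
        rw [hadd']
        have hexp := φ.toMultilinearMap.map_add_univ (fun i => c • S i lam) u'
        rw [AlternatingMap.coe_multilinearMap] at hexp
        rw [hexp]
        apply Finset.sum_congr rfl
        intro s _
        have hpw : s.piecewise (fun i => c • S i lam) u'
            = s.piecewise (fun i => c • (s.piecewise (fun i' => S i' lam) u') i)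
                (s.piecewise (fun i' => S i' lam) u') := by
          funext i
          by_cases hi : i ∈ s
          · simp [Finset.piecewise_eq_of_mem _ _ _ hi]
          · simp [Finset.piecewise_eq_of_notMem _ _ _ hi]
        rw [hpw]
        have := φ.toMultilinearMap.map_piecewise_smul (fun _ => c)
          (s.piecewise (fun i' => S i' lam) u') s
        rw [AlternatingMap.coe_multilinearMap] at this
        rw [this]
        rw [Finset.prod_const, smul_eq_mul, mul_comm]
      have h3 : φ (fun i => u' i + c • S i lam) = 0 := by
        have : (fun i : Fin (r+1) => u' i + c • S i lam)
            = fun i : Fin (r+1) => u' i + S i (c * lam) := by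
          funext i; rw [hSsmul c hc lam i]
        rw [this]
        exact key0 (c * lam)
      rw [h1, ← h2, h3]
    have hp0 : p = 0 := by
      apply Polynomial.eq_zero_of_infinite_isRoot
      apply Set.Infinite.mono (s := Set.range (fun q : ℚ => (q : k)))
      · intro x hx
        obtain ⟨q, rfl⟩ := hx
        exact heval (q : k) (d_ratCast d hadd hmul q)
      · exact Set.infinite_range_of_injective Rat.cast_injective
    have hcoeff : p.coeff 1 = ∑ s : Finset (Fin (r+1)), if s.card = 1 then a s else 0 := by
      rw [hp, Polynomial.finset_sum_coeff]
      apply Finset.sum_congr rfl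
      intro s _
      rw [Polynomial.coeff_C_mul, Polynomial.coeff_X_pow]
      by_cases h : s.card = 1
      · simp [h]
      · rw [if_neg (fun hh => h hh.symm), if_neg h, mul_zero]
    have hzero : ∑ s : Finset (Fin (r+1)), (if s.card = 1 then a s else 0) = 0 := by
      rw [← hcoeff, hp0, Polynomial.coeff_zero]
    have hsingle : ∑ i : Fin (r+1), φ (Function.update u' i (S i lam))
        = ∑ s ∈ Finset.univ.filter (fun s : Finset (Fin (r+1)) => s.card = 1), a s := by
      apply Finset.sum_bij (fun i _ => ({i} : Finset (Fin (r+1))))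
      · intro i _; simp
      · intro i _ j _ h; exact Finset.singleton_injective h
      · intro s hs
        rw [Finset.mem_filter] at hs
        obtain ⟨i, rfl⟩ := Finset.card_eq_one.1 hs.2
        exact ⟨i, Finset.mem_univ i, rfl⟩
      · intro i _
        rw [ha]
        simp only
        rw [Finset.piecewise_singleton]
    rw [hsingle, Finset.sum_filter, hzero]
  -- expand by linearity in the i-th slot
  have hupd : ∀ (lam : k) (i : Fin (r+1)), φ (Function.update u' i (S i lam))
      = ∑ j ∈ Finset.range ((i:ℕ)+1),
          ((((i:ℕ).choose j : ℕ) : k) * d^[j] lam) * φ (Function.update u' i (D^[(i:ℕ)-j] y)) := by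
    intro lam i
    set ℓ : M →ₗ[k] k := φ.toMultilinearMap.toLinearMap u' i with hℓ
    have hl : ∀ x : M, ℓ x = φ (Function.update u' i x) := by
      intro x
      rw [hℓ, MultilinearMap.toLinearMap_apply, AlternatingMap.coe_multilinearMap]
    rw [← hl, hS]
    simp only
    rw [map_sum]
    apply Finset.sum_congr rfl
    intro j _
    rw [map_smul, hl, smul_eq_mul]
  -- collect into coefficients A j
  set A : ℕ → k := fun j => ∑ i : Fin (r+1),
      if j ≤ (i:ℕ) then (((i:ℕ).choose j : ℕ) : k) * φ (Function.update u' i (D^[(i:ℕ)-j] y))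
      else 0 with hAdef
  have hA : ∀ lam : k, ∑ j ∈ Finset.range (r+1), d^[j] lam * A j = 0 := by
    intro lam
    have h1 := hB1 lam
    rw [Finset.sum_congr rfl (fun i _ => hupd lam i)] at h1
    have h2 : ∀ i : Fin (r+1),
        (∑ j ∈ Finset.range ((i:ℕ)+1),
          ((((i:ℕ).choose j : ℕ) : k) * d^[j] lam) * φ (Function.update u' i (D^[(i:ℕ)-j] y)))
        = ∑ j ∈ Finset.range (r+1),
            if j ≤ (i:ℕ) then ((((i:ℕ).choose j : ℕ) : k) * d^[j] lam)
              * φ (Function.update u' i (D^[(i:ℕ)-j] y)) else 0 := by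
      intro i
      rw [← Finset.sum_filter]
      apply Finset.sum_congr
      · ext j
        simp only [Finset.mem_filter, Finset.mem_range]
        have := i.isLt
        omega
      · intro j _; rfl
    rw [Finset.sum_congr rfl (fun i _ => h2 i), Finset.sum_comm] at h1
    rw [← h1]
    apply Finset.sum_congr rfl
    intro j _
    rw [hAdef]
    simp only
    rw [Finset.mul_sum]
    apply Finset.sum_congr rfl
    intro i _
    by_cases h : j ≤ (i:ℕ)
    · simp only [h, if_true]; ring
    · simp [h]
  -- triangular elimination
  have hAzero : ∀ s, s ≤ r → A s = 0 := by
    intro s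
    induction s using Nat.strong_induction_on with
    | _ s ih =>
      intro hs
      have h := hA (t ^ s)
      rw [Finset.sum_congr rfl
        (fun j _ => by rw [d_iter_pow d hadd hmul t ht s j])] at h
      rw [Finset.sum_eq_single s] at h
      · rw [Nat.descFactorial_self, Nat.sub_self, pow_zero, mul_one] at h
        have hfac : ((s.factorial : ℕ) : k) ≠ 0 := Nat.cast_ne_zero.2 s.factorial_ne_zero
        rcases mul_eq_zero.1 h with h' | h'
        · exact absurd h' hfac
        · exact h'
      · intro j hj hne
        rcases lt_or_gt_of_ne hne.symm with hlt | hgt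
        · -- s < j, i.e. descFactorial s j = 0
          rw [Nat.descFactorial_eq_zero_iff_lt.2 hlt]
          push_cast
          ring
        · -- j < s ≤ r : A j = 0
          rw [ih j hgt (by omega)]
          ring
      · intro habs
        exact absurd (Finset.mem_range.2 (by omega)) habs
  -- but A r = 1
  have hAr : A r = 1 := by
    rw [hAdef]
    simp only
    rw [Finset.sum_eq_single (Fin.last r)]
    · simp only [Fin.val_last, le_refl, if_true, Nat.choose_self, Nat.cast_one, one_mul,
        Nat.sub_self]
      have hupdw : Function.update u' (Fin.last r) (D^[0] y) = w := by
        funext i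
        induction i using Fin.lastCases with
        | last =>
          rw [Function.update_self, Function.iterate_zero_apply, hw, Fin.snoc_last]
        | cast j =>
          rw [Function.update_of_ne (Fin.castSucc_lt_last j).ne, hw, Fin.snoc_castSucc]
          rfl
      rw [hupdw, hφw]
    · intro i _ hne
      have hne' : (i : ℕ) ≠ r := by
        intro h
        exact hne (Fin.ext (by rw [h, Fin.val_last]))
      have : ¬ (r ≤ (i : ℕ)) := by
        have := i.isLt
        omega
      simp [this]
    · simp
  rw [hAzero r le_rfl] at hAr
  exact zero_ne_one hAr

end Main

section Flag
open Module
variable {k : Type*} [Field k] (d : k → k)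
  (hadd : ∀ a b : k, d (a + b) = d a + d b)
  (hmul : ∀ a b : k, d (a * b) = d a * b + a * d b)
  {M : Type*} [AddCommGroup M] [Module k M] (D : M → M)
  (hDadd : ∀ x y : M, D (x + y) = D x + D y)
  (hLeibniz : ∀ (f : k) (m : M), D (f • m) = d f • m + f • D m)

include hadd hmul hDadd hLeibniz in
lemma flag_mem (c : k) (m : M) (i : ℕ) :
    (fun x => c • D x)^[i] m ∈ Submodule.span k (Set.range fun l : Fin (i+1) => D^[(l:ℕ)] m) := by
  induction i with
  | zero =>
    apply Submodule.subset_span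
    exact ⟨0, rfl⟩
  | succ i ih =>
    set V : ℕ → Submodule k M :=
      fun i => Submodule.span k (Set.range fun l : Fin (i+1) => D^[(l:ℕ)] m) with hV
    have hmono : V i ≤ V (i+1) := by
      apply Submodule.span_mono
      rintro x ⟨l, rfl⟩
      exact ⟨l.castSucc, rfl⟩
    have hDmap : ∀ x ∈ V i, D x ∈ V (i+1) := by
      intro x hx
      induction hx using Submodule.span_induction with
      | mem x hxm =>
        obtain ⟨l, rfl⟩ := hxm
        apply Submodule.subset_span
        refine ⟨⟨(l:ℕ)+1, by omega⟩, ?_⟩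
        simp [Function.iterate_succ_apply']
      | zero =>
        have : D (0 : M) = 0 := by
          have := hDadd 0 0; simpa using this.symm
        rw [this]; exact Submodule.zero_mem _
      | add x y hx hy ihx ihy =>
        rw [hDadd]; exact Submodule.add_mem _ ihx ihy
      | smul a x hx ihx =>
        rw [hLeibniz]
        exact Submodule.add_mem _ (Submodule.smul_mem _ _ (hmono hx)) (Submodule.smul_mem _ _ ihx)
    rw [Function.iterate_succ_apply']
    exact Submodule.smul_mem _ _ (hDmap _ ih)

end Flag

section Final
open Module

theorem cyclic_vector_theorem'
    (k : Type*) [Field k] [CharZero k] (d : k → k)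
    (hadd : ∀ a b : k, d (a + b) = d a + d b)
    (hmul : ∀ a b : k, d (a * b) = d a * b + a * d b)
    (a : k) (ha : d a ≠ 0)
    (M : Type*) [AddCommGroup M] [Module k M] [FiniteDimensional k M]
    (n : ℕ) (hn : 1 ≤ n) (hdim : Module.finrank k M = n)
    (D : M → M)
    (hDadd : ∀ x y : M, D (x + y) = D x + D y)
    (hLeibniz : ∀ (f : k) (m : M), D (f • m) = d f • m + f • D m) :
    ∃ m : M, LinearIndependent k (fun i : Fin n => D^[(i : ℕ)] m) ∧
      Submodule.span k (Set.range fun i : Fin n => D^[(i : ℕ)] m) = ⊤ := by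
  classical
  set c : k := (d a)⁻¹ with hc
  set d' : k → k := fun x => c * d x with hd'
  set D' : M → M := fun x => c • D x with hD'
  have hadd' : ∀ x y : k, d' (x + y) = d' x + d' y := by
    intro x y; rw [hd']; simp only; rw [hadd, mul_add]
  have hmul' : ∀ x y : k, d' (x * y) = d' x * y + x * d' y := by
    intro x y; rw [hd']; simp only; rw [hmul]; ring
  have hta : d' a = 1 := by
    rw [hd']; simp only; rw [hc, inv_mul_cancel₀ ha]
  have hDadd' : ∀ x y : M, D' (x + y) = D' x + D' y := by
    intro x y; rw [hD']; simp only; rw [hDadd, smul_add]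
  have hLeibniz' : ∀ (f : k) (m : M), D' (f • m) = d' f • m + f • D' m := by
    intro f m
    rw [hD', hd']
    simp only
    rw [hLeibniz, smul_add, smul_smul, smul_smul, smul_smul, mul_comm c f]
  obtain ⟨m, hm⟩ := exists_independent d' hadd' hmul' a hta M D' hDadd' hLeibniz'
  rw [hdim] at hm
  have hnon : Nonempty (Fin n) := ⟨⟨0, hn⟩⟩
  have hspan' : Submodule.span k (Set.range fun i : Fin n => D'^[(i : ℕ)] m) = ⊤ :=
    hm.span_eq_top_of_card_eq_finrank (by rw [Fintype.card_fin, hdim])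
  have hle : Submodule.span k (Set.range fun i : Fin n => D'^[(i : ℕ)] m)
      ≤ Submodule.span k (Set.range fun i : Fin n => D^[(i : ℕ)] m) := by
    rw [Submodule.span_le]
    rintro x ⟨i, rfl⟩
    have h1 := flag_mem d hadd hmul D hDadd hLeibniz c m (i : ℕ)
    rw [← hD'] at h1
    refine Submodule.span_mono ?_ h1
    rintro x ⟨l, rfl⟩
    have hl := l.isLt
    have hi := i.isLt
    exact ⟨⟨(l : ℕ), by omega⟩, rfl⟩
  have hspan : Submodule.span k (Set.range fun i : Fin n => D^[(i : ℕ)] m) = ⊤ :=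
    eq_top_iff.2 (hspan' ▸ hle)
  refine ⟨m, ?_, hspan⟩
  exact linearIndependent_of_top_le_span_of_card_eq_finrank hspan.ge
    (by rw [Fintype.card_fin, hdim])
end Final
end CyclicVectorAux

/-- Cyclic Vector Theorem: a differential module of dimension `n ≥ 1` over a
differential field `(k, ∂)` of characteristic zero containing an element `a` with
`da ≠ 0` has a cyclic vector, i.e. an element `m` such that
`m, D m, …, D^[n-1] m` is a `k`-basis of `M`. -/
theorem cyclic_vector_theorem
    (k : Type*) [Field k] [CharZero k] (d : k → k)
    (hadd : ∀ a b : k, d (a + b) = d a + d b)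
    (hmul : ∀ a b : k, d (a * b) = d a * b + a * d b)
    (a : k) (ha : d a ≠ 0)
    (M : Type*) [AddCommGroup M] [Module k M] [FiniteDimensional k M]
    (n : ℕ) (hn : 1 ≤ n) (hdim : Module.finrank k M = n)
    (D : M → M)
    (hDadd : ∀ x y : M, D (x + y) = D x + D y)
    (hLeibniz : ∀ (f : k) (m : M), D (f • m) = d f • m + f • D m) :
    ∃ m : M, LinearIndependent k (fun i : Fin n => D^[(i : ℕ)] m) ∧
      Submodule.span k (Set.range fun i : Fin n => D^[(i : ℕ)] m) = ⊤ :=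
  CyclicVectorAux.cyclic_vector_theorem' k d hadd hmul a ha M n hn hdim D hDadd hLeibniz
end

section
/- Let r > 0 and let A be an n×n matrix whose entries are complex-analytic functions on the disk D = {z ∈ ℂ : |z| < r}. Then there exist 0 < ρ ≤ r and a function Y from {|z| < ρ} to the n×n complex matrices, analytic on that disk (entrywise), such that Y(0) is the identity matrix, Y′(z) = A(z)·Y(z) for all |z| < ρ (entrywise complex derivative), and Y(z) is an invertible matrix for every |z| < ρ. -/
open Finset

variable {E : Type*} [NormedRing E] [NormedAlgebra ℂ E] [NormOneClass E]

/-- Coefficients of the formal power-series solution of `Y' = B(Y)`. -/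
noncomputable def odeCoeff (b : ℕ → E → E) : ℕ → E
  | 0 => 1
  | (k+1) => (((k : ℂ) + 1)⁻¹) • ∑ j ∈ Finset.range (k+1), b j (odeCoeff b (k - j))
  decreasing_by exact Nat.lt_succ_of_le (Nat.sub_le k j)

lemma odeCoeff_smul_succ (b : ℕ → E → E) (k : ℕ) :
    ((k : ℂ) + 1) • odeCoeff b (k+1) = ∑ j ∈ Finset.range (k+1), b j (odeCoeff b (k - j)) := by
  rw [odeCoeff, smul_smul, mul_inv_cancel₀ (Nat.cast_add_one_ne_zero k), one_smul]

lemma odeCoeff_norm_le (b : ℕ → E → E) (K : ℝ) (hK : 1 ≤ K)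
    (hb : ∀ j x, ‖b j x‖ ≤ K ^ (j+1) * ‖x‖) : ∀ k, ‖odeCoeff b k‖ ≤ (K^2) ^ k := by
  have hK0 : 0 < K := lt_of_lt_of_le one_pos hK
  intro k
  induction k using Nat.strong_induction_on with
  | _ k ih =>
    match k with
    | 0 => simp [odeCoeff]
    | (k+1) =>
      rw [odeCoeff]
      have h1 : ‖∑ j ∈ Finset.range (k+1), b j (odeCoeff b (k - j))‖
          ≤ (k+1) * K ^ (2*k+1) := by
        calc ‖∑ j ∈ Finset.range (k+1), b j (odeCoeff b (k - j))‖
            ≤ ∑ j ∈ Finset.range (k+1), ‖b j (odeCoeff b (k - j))‖ := norm_sum_le _ _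
          _ ≤ ∑ j ∈ Finset.range (k+1), K ^ (2*k+1) := by
              apply Finset.sum_le_sum
              intro j hj
              have hj' : j ≤ k := Nat.lt_succ_iff.mp (Finset.mem_range.mp hj)
              calc ‖b j (odeCoeff b (k - j))‖ ≤ K ^ (j+1) * ‖odeCoeff b (k - j)‖ := hb _ _
                _ ≤ K ^ (j+1) * (K^2) ^ (k - j) := by
                    apply mul_le_mul_of_nonneg_left
                      (ih (k-j) (Nat.lt_succ_of_le (Nat.sub_le k j))) (by positivity)
                _ = K ^ (j + 1 + 2*(k-j)) := by rw [← pow_mul, ← pow_add]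
                _ ≤ K ^ (2*k+1) := by
                    apply pow_le_pow_right₀ hK
                    omega
          _ = (k+1) * K ^ (2*k+1) := by rw [Finset.sum_const, Finset.card_range]; push_cast; ring
      calc ‖(((k : ℂ) + 1)⁻¹) • ∑ j ∈ Finset.range (k+1), b j (odeCoeff b (k - j))‖
          = ((k:ℝ)+1)⁻¹ * ‖∑ j ∈ Finset.range (k+1), b j (odeCoeff b (k - j))‖ := by
            rw [norm_smul]
            congr 1
            rw [norm_inv]
            congr 1
            have := Complex.norm_natCast (k+1)
            push_cast at this ⊢
            exact this
        _ ≤ ((k:ℝ)+1)⁻¹ * ((k+1) * K ^ (2*k+1)) := by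
            apply mul_le_mul_of_nonneg_left h1 (by positivity)
        _ = K ^ (2*k+1) := by field_simp
        _ ≤ (K^2) ^ (k+1) := by rw [← pow_mul]; apply pow_le_pow_right₀ hK; omega

open Finset Metric

variable [CompleteSpace E]

lemma summable_aux {c : ℕ → E} {C₀ M : ℝ} (hC₀ : 0 ≤ C₀) (hc : ∀ k, ‖c k‖ ≤ C₀ * M ^ k)
    {z : ℂ} {ρ : ℝ} (hz : ‖z‖ < ρ) (hρM : ρ * M < 1) (hM : 0 < M) :
    Summable (fun k => ‖z ^ k • c k‖) := by
  have hρ : 0 < ρ := lt_of_le_of_lt (norm_nonneg z) hz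
  apply Summable.of_nonneg_of_le (fun k => norm_nonneg _) (fun k => ?_)
    ((summable_geometric_of_lt_one (by positivity) hρM).mul_left C₀)
  calc ‖z ^ k • c k‖ = ‖z‖ ^ k * ‖c k‖ := by rw [norm_smul, norm_pow]
    _ ≤ ρ ^ k * (C₀ * M ^ k) := by
        apply mul_le_mul (pow_le_pow_left₀ (norm_nonneg z) hz.le k) (hc k) (norm_nonneg _)
          (by positivity)
    _ = C₀ * (ρ * M) ^ k := by rw [mul_pow]; ring

/-- Cauchy product of two power series written as tsums. -/
lemma cauchyProd_aux {u v : ℕ → E} {z : ℂ}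
    (hu : Summable (fun k => ‖z ^ k • u k‖)) (hv : Summable (fun k => ‖z ^ k • v k‖)) :
    (∑' k, z ^ k • u k) * (∑' k, z ^ k • v k)
      = ∑' k, z ^ k • ∑ j ∈ Finset.range (k+1), u j * v (k - j) := by
  rw [tsum_mul_tsum_eq_tsum_sum_antidiagonal_of_summable_norm hu hv]
  congr 1
  ext k
  rw [Finset.Nat.sum_antidiagonal_eq_sum_range_succ_mk, Finset.smul_sum]
  apply Finset.sum_congr rfl
  intro j hj
  rw [smul_mul_smul_comm, ← pow_add]
  congr 2
  have := Finset.mem_range.mp hj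
  omega

/-- summability of `k * x^(k-1)` -/
lemma summable_k_pow {x : ℝ} (h0 : 0 ≤ x) (h1 : x < 1) :
    Summable (fun k : ℕ => (k : ℝ) * x ^ (k - 1)) := by
  rw [← summable_nat_add_iff 1]
  have h2 : Summable (fun k : ℕ => (k : ℝ) * x ^ k) := by
    simpa [pow_one] using summable_pow_mul_geometric_of_norm_lt_one 1
      (r := x) (by rwa [Real.norm_eq_abs, abs_of_nonneg h0])
  have h3 : Summable (fun k : ℕ => x ^ k) := summable_geometric_of_lt_one h0 h1
  have := h2.add h3
  apply this.congr
  intro k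
  simp only [Nat.add_sub_cancel]
  push_cast
  ring

/-- Derivative of the power series sum. -/
lemma hasDerivAt_powerSum {c : ℕ → E} {M : ℝ} (hM : 1 ≤ M) (hc : ∀ k, ‖c k‖ ≤ M ^ k)
    {ρ : ℝ} (hρ : 0 < ρ) (hρM : ρ * M < 1) {z : ℂ} (hz : z ∈ ball (0:ℂ) ρ) :
    HasDerivAt (fun w => ∑' k, w ^ k • c k)
      (∑' (k : ℕ), z ^ k • (((k : ℂ) + 1) • c (k+1))) z := by
  have hM0 : 0 < M := lt_of_lt_of_le one_pos hM
  have hρM0 : 0 ≤ ρ * M := by positivity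
  set u : ℕ → ℝ := fun k => M * ((k : ℝ) * (ρ * M) ^ (k - 1)) with hu_def
  have hu : Summable u := (summable_k_pow hρM0 hρM).mul_left M
  have hball : ∀ w ∈ ball (0:ℂ) ρ, ‖w‖ < ρ := by
    intro w hw; simpa [dist_eq_norm] using mem_ball_iff_norm.mp hw
  have key : ∀ w ∈ ball (0:ℂ) ρ, HasDerivAt (fun y => ∑' k, y ^ k • c k)
      (∑' (k : ℕ), ((k : ℂ) * w ^ (k - 1)) • c k) w := by
    intro w hw
    apply hasDerivAt_tsum_of_isPreconnected hu isOpen_ball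
      (convex_ball (0:ℂ) ρ).isPreconnected
      (g := fun k y => y ^ k • c k) (g' := fun k y => ((k : ℂ) * y ^ (k - 1)) • c k)
      ?_ ?_ (Metric.mem_ball_self hρ) ?_ hw
    · intro k y _
      exact (hasDerivAt_pow k y).smul_const (c k)
    · intro k y hy
      have hy' : ‖y‖ < ρ := hball y hy
      calc ‖((k : ℂ) * y ^ (k - 1)) • c k‖ = (k : ℝ) * ‖y‖ ^ (k-1) * ‖c k‖ := by
            rw [norm_smul, norm_mul, norm_pow, Complex.norm_natCast]
        _ ≤ (k : ℝ) * ρ ^ (k-1) * M ^ k := by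
            apply mul_le_mul _ (hc k) (norm_nonneg _) (by positivity)
            exact mul_le_mul_of_nonneg_left
              (pow_le_pow_left₀ (norm_nonneg y) hy'.le _) (Nat.cast_nonneg k)
        _ ≤ u k := by
            rw [hu_def]
            simp only []
            rw [mul_pow]
            have h1 : M ^ k ≤ M * M ^ (k-1) := by
              rcases Nat.eq_zero_or_pos k with hk | hk
              · subst hk; simpa using hM
              · rw [← pow_succ']
                apply pow_le_pow_right₀ hM
                omega
            calc (k:ℝ) * ρ ^ (k-1) * M ^ k ≤ (k:ℝ) * ρ ^ (k-1) * (M * M ^ (k-1)) := by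
                  apply mul_le_mul_of_nonneg_left h1 (by positivity)
              _ = M * ((k:ℝ) * (ρ ^ (k-1) * M ^ (k-1))) := by ring
    · -- summability at 0
      apply Summable.of_norm
      exact summable_aux zero_le_one (fun k => by simpa using hc k) (by simpa using hρ) hρM hM0
  have h := key z hz
  convert h using 1
  -- reindex: ∑' k, (k * z^(k-1)) • c k = ∑' k, z^k • ((k+1) • c (k+1))
  have hsum : Summable (fun k : ℕ => ((k : ℂ) * z ^ (k - 1)) • c k) := by
    apply Summable.of_norm
    apply Summable.of_nonneg_of_le (fun k => norm_nonneg _) (fun k => ?_) hu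
    have hz' : ‖z‖ < ρ := hball z hz
    calc ‖((k : ℂ) * z ^ (k - 1)) • c k‖ = (k : ℝ) * ‖z‖ ^ (k-1) * ‖c k‖ := by
          rw [norm_smul, norm_mul, norm_pow, Complex.norm_natCast]
      _ ≤ (k : ℝ) * ρ ^ (k-1) * M ^ k := by
          apply mul_le_mul _ (hc k) (norm_nonneg _) (by positivity)
          exact mul_le_mul_of_nonneg_left
            (pow_le_pow_left₀ (norm_nonneg z) hz'.le _) (Nat.cast_nonneg k)
      _ ≤ u k := by
          rw [hu_def]
          simp only []
          rw [mul_pow]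
          have h1 : M ^ k ≤ M * M ^ (k-1) := by
            rcases Nat.eq_zero_or_pos k with hk | hk
            · subst hk; simpa using hM
            · rw [← pow_succ']
              apply pow_le_pow_right₀ hM
              omega
          calc (k:ℝ) * ρ ^ (k-1) * M ^ k ≤ (k:ℝ) * ρ ^ (k-1) * (M * M ^ (k-1)) := by
                apply mul_le_mul_of_nonneg_left h1 (by positivity)
            _ = M * ((k:ℝ) * (ρ ^ (k-1) * M ^ (k-1))) := by ring
  rw [hsum.tsum_eq_zero_add]
  simp only [Nat.cast_zero, zero_mul, zero_smul, zero_add]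
  apply tsum_congr
  intro k
  simp only [Nat.add_sub_cancel]
  push_cast
  rw [mul_smul]
  exact smul_comm _ _ _

/-- Abstract local existence: analytic `A` gives `Y' = A·Y`, `Y 0 = 1`, with left inverse `Z`. -/
lemma abstract_ode_solution (Amap : ℂ → E) (r : ℝ) (hr : 0 < r)
    (hAn : AnalyticOnNhd ℂ Amap (ball (0:ℂ) r)) :
    ∃ ρ : ℝ, 0 < ρ ∧ ρ ≤ r ∧ ∃ Y Z : ℂ → E,
      Y 0 = 1 ∧
      (∀ z ∈ ball (0:ℂ) ρ, HasDerivAt Y (Amap z * Y z) z) ∧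
      (∀ z ∈ ball (0:ℂ) ρ, Z z * Y z = 1) := by
  classical
  obtain ⟨p, hp⟩ := hAn 0 (by simpa using hr)
  -- a radius where coefficients are controlled
  obtain ⟨r₁, hr₁0, hr₁⟩ := ENNReal.lt_iff_exists_nnreal_btwn.mp hp.radius_pos
  obtain ⟨C, hC, hCb⟩ := p.norm_mul_pow_le_of_lt_radius hr₁
  have hr₁0' : (0:ℝ) < r₁ := by exact_mod_cast hr₁0
  -- local sum representation
  have hev := hasFPowerSeriesAt_iff.mp hp
  obtain ⟨ε, hε, hrep⟩ := Metric.eventually_nhds_iff.mp hev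
  set a : ℕ → E := fun n => p.coeff n with ha_def
  set K : ℝ := max 1 (max C (1/r₁)) with hK_def
  have hK1 : (1:ℝ) ≤ K := le_max_left _ _
  have hK0 : (0:ℝ) < K := lt_of_lt_of_le one_pos hK1
  have haK : ∀ n, ‖a n‖ ≤ K ^ (n+1) := by
    intro n
    have h1 : ‖a n‖ ≤ ‖p n‖ :=
      le_of_eq (p.norm_apply_eq_norm_coef (n := n)).symm
    have h2 : ‖p n‖ ≤ C * (1/r₁) ^ n := by
      rw [div_pow, one_pow, mul_one_div, le_div_iff₀ (by positivity)]
      exact hCb n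
    calc ‖a n‖ ≤ C * (1/r₁) ^ n := h1.trans h2
      _ ≤ K * K ^ n := by
          apply mul_le_mul ((le_max_left C (1/r₁)).trans (le_max_right _ _))
            (pow_le_pow_left₀ (by positivity)
              ((le_max_right C (1/r₁)).trans (le_max_right _ _)) n) (by positivity) hK0.le
      _ = K ^ (n+1) := by rw [pow_succ]; ring
  -- the two coefficient recursions
  set b : ℕ → E → E := fun j x => a j * x with hb_def
  set b' : ℕ → E → E := fun j x => -(x * a j) with hb'_def
  have hb : ∀ j x, ‖b j x‖ ≤ K ^ (j+1) * ‖x‖ := fun j x =>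
    (norm_mul_le _ _).trans (mul_le_mul_of_nonneg_right (haK j) (norm_nonneg x))
  have hb' : ∀ j x, ‖b' j x‖ ≤ K ^ (j+1) * ‖x‖ := by
    intro j x
    rw [hb'_def]
    simp only [norm_neg]
    calc ‖x * a j‖ ≤ ‖x‖ * ‖a j‖ := norm_mul_le _ _
      _ ≤ ‖x‖ * K ^ (j+1) := mul_le_mul_of_nonneg_left (haK j) (norm_nonneg x)
      _ = K ^ (j+1) * ‖x‖ := mul_comm _ _
  set c : ℕ → E := odeCoeff b with hc_def
  set d : ℕ → E := odeCoeff b' with hd_def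
  have hc : ∀ k, ‖c k‖ ≤ (K^2) ^ k := odeCoeff_norm_le b K hK1 hb
  have hd : ∀ k, ‖d k‖ ≤ (K^2) ^ k := odeCoeff_norm_le b' K hK1 hb'
  set M : ℝ := K ^ 2 with hM_def
  have hM1 : (1:ℝ) ≤ M := one_le_pow₀ hK1
  have hM0 : (0:ℝ) < M := by positivity
  -- the radius
  set ρ : ℝ := min r (min ε (1 / (2 * M))) with hρ_def
  have hρ0 : 0 < ρ := lt_min hr (lt_min hε (by positivity))
  have hρr : ρ ≤ r := min_le_left _ _
  have hρε : ρ ≤ ε := (min_le_right _ _).trans (min_le_left _ _)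
  have hρM : ρ * M < 1 := by
    have : ρ ≤ 1 / (2*M) := (min_le_right _ _).trans (min_le_right _ _)
    calc ρ * M ≤ (1/(2*M)) * M := mul_le_mul_of_nonneg_right this hM0.le
      _ = 1/2 := by
          have : (2:ℝ) * M ≠ 0 := by positivity
          field_simp
      _ < 1 := by norm_num
  have hKρ : ∀ z : ℂ, ‖z‖ < ρ → ρ * K < 1 := by
    intro z hz
    have hKM : K ≤ M := by
      rw [hM_def, sq]
      nlinarith
    calc ρ * K ≤ ρ * M := mul_le_mul_of_nonneg_left hKM hρ0.le
      _ < 1 := hρM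
  -- representation of A on the ball
  have hArep : ∀ z ∈ ball (0:ℂ) ρ, HasSum (fun n => z ^ n • a n) (Amap z) := by
    intro z hz
    have : dist z 0 < ε := lt_of_lt_of_le (mem_ball.mp hz) hρε
    simpa using hrep this
  have haK' : ∀ n, ‖a n‖ ≤ K * K ^ n := by
    intro n; calc ‖a n‖ ≤ K ^ (n+1) := haK n
      _ = K * K ^ n := by rw [pow_succ]; ring
  have hasum : ∀ z ∈ ball (0:ℂ) ρ, Summable (fun k => ‖z ^ k • a k‖) := by
    intro z hz
    exact summable_aux hK0.le haK' (mem_ball_zero_iff.mp hz) (hKρ z (mem_ball_zero_iff.mp hz)) hK0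
  have hcsum : ∀ z ∈ ball (0:ℂ) ρ, Summable (fun k => ‖z ^ k • c k‖) := by
    intro z hz
    exact summable_aux zero_le_one (fun k => by simpa using hc k) (mem_ball_zero_iff.mp hz) hρM hM0
  have hdsum : ∀ z ∈ ball (0:ℂ) ρ, Summable (fun k => ‖z ^ k • d k‖) := by
    intro z hz
    exact summable_aux zero_le_one (fun k => by simpa using hd k) (mem_ball_zero_iff.mp hz) hρM hM0
  -- the solutions
  set Y : ℂ → E := fun z => ∑' k, z ^ k • c k with hY_def
  set Z : ℂ → E := fun z => ∑' k, z ^ k • d k with hZ_def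
  have hY0 : Y 0 = 1 := by
    rw [hY_def]
    simp only []
    rw [tsum_eq_single 0 (by intro k hk; simp [zero_pow hk])]
    simp [hc_def, odeCoeff]
  have hZ0 : Z 0 = 1 := by
    rw [hZ_def]
    simp only []
    rw [tsum_eq_single 0 (by intro k hk; simp [zero_pow hk])]
    simp [hd_def, odeCoeff]
  -- derivatives
  have hYd : ∀ z ∈ ball (0:ℂ) ρ, HasDerivAt Y (Amap z * Y z) z := by
    intro z hz
    have h0 := hasDerivAt_powerSum hM1 hc hρ0 hρM hz
    have heq : Amap z * Y z = ∑' (k : ℕ), z ^ k • (((k:ℂ)+1) • c (k+1)) := by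
      rw [(hArep z hz).tsum_eq.symm, hY_def]
      simp only []
      rw [cauchyProd_aux (hasum z hz) (hcsum z hz)]
      apply tsum_congr; intro k
      congr 1
      rw [hc_def, odeCoeff_smul_succ]
    rw [heq]
    exact h0
  have hZd : ∀ z ∈ ball (0:ℂ) ρ, HasDerivAt Z (-(Z z * Amap z)) z := by
    intro z hz
    have h0 := hasDerivAt_powerSum hM1 hd hρ0 hρM hz
    have hstep : ∀ k : ℕ, ((k:ℂ)+1) • d (k+1)
        = -(∑ j ∈ Finset.range (k+1), d j * a (k - j)) := by
      intro k
      rw [hd_def, odeCoeff_smul_succ]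
      have h1 : (∑ j ∈ Finset.range (k+1), b' j (odeCoeff b' (k - j)))
          = ∑ j ∈ Finset.range (k+1), -(odeCoeff b' (k-j) * a j) := rfl
      rw [h1, Finset.sum_neg_distrib, neg_inj,
        ← Finset.sum_range_reflect (fun j => odeCoeff b' j * a (k - j)) (k+1)]
      apply Finset.sum_congr rfl
      intro j hj
      have hjk := Finset.mem_range.mp hj
      congr 2 <;> omega
    have heq : -(Z z * Amap z) = ∑' (k : ℕ), z ^ k • (((k:ℂ)+1) • d (k+1)) := by
      rw [(hArep z hz).tsum_eq.symm, hZ_def]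
      simp only []
      rw [cauchyProd_aux (hdsum z hz) (hasum z hz), ← tsum_neg]
      apply tsum_congr; intro k
      rw [hstep k, smul_neg]
    rw [heq]
    exact h0
  -- Z * Y is constant = 1
  have hZY : ∀ z ∈ ball (0:ℂ) ρ, Z z * Y z = 1 := by
    have hW : ∀ z ∈ ball (0:ℂ) ρ, HasDerivAt (fun w => Z w * Y w) 0 z := by
      intro z hz
      have h := (hZd z hz).mul (hYd z hz)
      convert h using 1
      · rfl
      rw [neg_mul, mul_assoc]
      exact (neg_add_cancel _).symm
    intro z hz
    have hdiff : DifferentiableOn ℂ (fun w => Z w * Y w) (ball (0:ℂ) ρ) :=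
      fun w hw => ((hW w hw).differentiableAt).differentiableWithinAt
    have hconst := (convex_ball (0:ℂ) ρ).is_const_of_fderivWithin_eq_zero hdiff
      (fun w hw => by
        have h0 : HasFDerivAt (fun w => Z w * Y w) (0 : ℂ →L[ℂ] E) w := by
          have := (hW w hw).hasFDerivAt
          rw [show (0 : ℂ →L[ℂ] E) = ContinuousLinearMap.toSpanSingleton ℂ 0 by ext; simp]
          exact this
        exact h0.hasFDerivWithinAt.fderivWithin (isOpen_ball.uniqueDiffOn w hw))
      hz (Metric.mem_ball_self hρ0)
    rw [hconst]
    simp [hZ0, hY0]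
  exact ⟨ρ, hρ0, hρr, Y, Z, hY0, hYd, hZY⟩


attribute [local instance] Matrix.linftyOpNormedRing Matrix.linftyOpNormedAlgebra

/-- Local existence of an analytic fundamental solution matrix: if the entries of the
`n×n` matrix `A` are analytic on the disk of radius `r > 0` about `0`, then on some
smaller disk of radius `ρ > 0` there is an entrywise-analytic matrix function `Y` with
`Y(0) = 1`, `Y′(z) = A(z)·Y(z)`, and `Y(z)` invertible for all `z` in the disk. -/
theorem analytic_fundamental_matrix_exists
    (n : ℕ) (r : ℝ) (hr : 0 < r) (A : ℂ → Matrix (Fin n) (Fin n) ℂ)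
    (hA : ∀ i j : Fin n, AnalyticOnNhd ℂ (fun z => A z i j) (Metric.ball (0 : ℂ) r)) :
    ∃ ρ : ℝ, 0 < ρ ∧ ρ ≤ r ∧
      ∃ Y : ℂ → Matrix (Fin n) (Fin n) ℂ,
        (∀ i j : Fin n, AnalyticOnNhd ℂ (fun z => Y z i j) (Metric.ball (0 : ℂ) ρ)) ∧
        Y 0 = 1 ∧
        (∀ z ∈ Metric.ball (0 : ℂ) ρ, ∀ i j : Fin n,
          HasDerivAt (fun w => Y w i j) ((A z * Y z) i j) z) ∧
        (∀ z ∈ Metric.ball (0 : ℂ) ρ, IsUnit (Y z)) := by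
  rcases Nat.eq_zero_or_pos n with hn | hn
  · subst hn
    exact ⟨r, hr, le_rfl, fun _ => 1, fun i => i.elim0, rfl,
      fun z _ i => i.elim0, fun z _ => isUnit_one⟩
  haveI : NeZero n := ⟨hn.ne'⟩
  -- A is analytic as a matrix-valued map
  have hAn : AnalyticOnNhd ℂ A (ball (0:ℂ) r) := by
    have hrw : A = fun z => ∑ i : Fin n, ∑ j : Fin n,
        (A z i j) • Matrix.single i j (1:ℂ) := by
      funext z
      conv_lhs => rw [Matrix.matrix_eq_sum_single (A z)]
      apply Finset.sum_congr rfl; intro i _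
      apply Finset.sum_congr rfl; intro j _
      rw [Matrix.smul_single, smul_eq_mul, mul_one]
    rw [hrw]
    intro z hz
    apply Finset.analyticAt_fun_sum
    intro i _
    apply Finset.analyticAt_fun_sum
    intro j _
    exact (hA i j z hz).smul analyticAt_const
  obtain ⟨ρ, hρ0, hρr, Y, Z, hY0, hYd, hZY⟩ := abstract_ode_solution A r hr hAn
  refine ⟨ρ, hρ0, hρr, Y, ?_, hY0, ?_, ?_⟩
  · -- entrywise analyticity
    intro i j
    have hYan : AnalyticOnNhd ℂ Y (ball (0:ℂ) ρ) := by
      apply DifferentiableOn.analyticOnNhd (fun w hw =>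
        ((hYd w hw).differentiableAt).differentiableWithinAt) isOpen_ball
    intro z hz
    have hL := (Matrix.entryLinearMap ℂ ℂ i j).toContinuousLinearMap.analyticAt (Y z)
    exact hL.comp (hYan z hz)
  · intro z hz i j
    exact ((Matrix.entryLinearMap ℂ ℂ i j).toContinuousLinearMap.hasFDerivAt).comp_hasDerivAt
      z (hYd z hz)
  · intro z hz
    exact ⟨⟨Y z, Z z, mul_eq_one_comm.mp (hZY z hz), hZY z hz⟩, rfl⟩
end

section
/- (Borel–Ritt) Let a < b be real numbers with b − a < 2π, and let (cₙ)_{n≥0} be an arbitrary sequence of complex numbers. Then there exist ρ > 0 and a function f analytic on the open sector S(a,b,ρ) such that ∑_{n≥0} cₙzⁿ is an asymptotic expansion of f on S(a,b,ρ): for every closed subsector W of S(a,b,ρ) and every N ≥ 0 there is a constant C with |f(z) − ∑_{n≤N−1} cₙzⁿ| ≤ C|z|^N for all z ∈ W. -/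
open Complex Real

section BRaux

lemma BR_one_sub_exp_neg_le (w : ℂ) (hw : 0 ≤ w.re) :
    ‖1 - Complex.exp (-w)‖ ≤ ‖w‖ := by
  have hderiv : ∀ t ∈ Set.uIcc (0:ℝ) 1,
      HasDerivAt (fun t : ℝ => -Complex.exp (-(t : ℝ) * w)) (w * Complex.exp (-(t:ℝ) * w)) t := by
    intro t _
    have h1 : HasDerivAt (fun t : ℝ => -(t:ℝ) * w) (-w) t := by
      simpa using ((hasDerivAt_id t).ofReal_comp.neg.mul_const w)
    have := (h1.cexp).neg
    exact this.congr_deriv (by ring)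
  have hint := intervalIntegral.integral_eq_sub_of_hasDerivAt hderiv (by
    apply Continuous.intervalIntegrable
    fun_prop)
  have heq : (1 : ℂ) - Complex.exp (-w) =
      ∫ t in (0:ℝ)..1, w * Complex.exp (-(t:ℝ)*w) := by
    rw [hint]; push_cast; simp; ring
  rw [heq]
  have := intervalIntegral.norm_integral_le_of_norm_le_const (a := (0:ℝ)) (b := 1)
    (C := ‖w‖) (f := fun t : ℝ => w * Complex.exp (-(t:ℝ)*w)) ?_
  · simpa using this
  · intro t ht
    rw [Set.uIoc_of_le (by norm_num)] at ht
    have hnorm : ‖w * Complex.exp (-(t:ℝ)*w)‖ = ‖w‖ * Real.exp (-(t * w.re)) := by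
      simp only [norm_mul, Complex.norm_exp]
      congr 2
      simp
    rw [hnorm]
    have : Real.exp (-(t * w.re)) ≤ 1 := by
      rw [Real.exp_le_one_iff]
      exact neg_nonpos.2 (mul_nonneg (le_of_lt ht.1) hw)
    calc ‖w‖ * Real.exp (-(t * w.re)) ≤ ‖w‖ * 1 :=
      mul_le_mul_of_nonneg_left this (norm_nonneg _)
    _ = ‖w‖ := mul_one _

lemma BR_one_sub_exp_neg_le_two (w : ℂ) (hw : 0 ≤ w.re) :
    ‖1 - Complex.exp (-w)‖ ≤ 2 := by
  calc ‖1 - Complex.exp (-w)‖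
      ≤ ‖(1:ℂ)‖ + ‖Complex.exp (-w)‖ := by
        simpa [sub_eq_add_neg] using norm_add_le (1:ℂ) (-(Complex.exp (-w)))
  _ ≤ 1 + 1 := by
      rw [norm_one]
      gcongr
      rw [Complex.norm_exp, Complex.neg_re]
      exact Real.exp_le_one_iff.mpr (neg_nonpos.2 hw)
  _ = 2 := by norm_num

lemma BR_polar_exp (r θ : ℝ) (hr : 0 < r) :
    (r : ℂ) * Complex.exp ((θ:ℂ) * Complex.I)
      = Complex.exp ((Real.log r : ℂ) + (θ:ℂ) * Complex.I) := by
  rw [Complex.exp_add, ← Complex.ofReal_exp, Real.exp_log hr]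

lemma BR_log_polar (r θ : ℝ) (hr : 0 < r) (h1 : -Real.pi < θ) (h2 : θ ≤ Real.pi) :
    Complex.log ((r : ℂ) * Complex.exp ((θ:ℂ) * Complex.I))
      = (Real.log r : ℂ) + (θ:ℂ) * Complex.I := by
  rw [BR_polar_exp r θ hr, Complex.log_exp] <;> simpa using ‹_›

lemma BR_rotate (σ r θ : ℝ) :
    Complex.exp (-(σ:ℂ) * Complex.I) * ((r:ℂ) * Complex.exp ((θ:ℂ) * Complex.I))
      = (r:ℂ) * Complex.exp ((↑(θ - σ):ℂ) * Complex.I) := by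
  rw [mul_left_comm, ← Complex.exp_add]
  push_cast
  ring_nf

lemma BR_abs_polar (r θ : ℝ) (hr : 0 ≤ r) :
    ‖(r:ℂ) * Complex.exp ((θ:ℂ) * Complex.I)‖ = r := by
  rw [norm_mul, Complex.norm_exp_ofReal_mul_I, Complex.norm_real, Real.norm_eq_abs, _root_.abs_of_nonneg hr, mul_one]

noncomputable def BRh (σ : ℝ) (z : ℂ) : ℂ :=
  Complex.exp (-(1/2 : ℂ) * Complex.log (Complex.exp (-(σ:ℂ) * Complex.I) * z))

lemma BR_sqrt_exp (r : ℝ) (hr : 0 < r) :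
    Real.exp (-(Real.log r / 2)) = (Real.sqrt r)⁻¹ := by
  rw [show Real.sqrt r = Real.exp (Real.log r / 2) by
    rw [Real.sqrt_eq_rpow, Real.rpow_def_of_pos hr]; ring_nf]
  rw [← Real.exp_neg]

lemma BRh_abs (σ : ℝ) (z : ℂ) (hz : z ≠ 0) :
    ‖BRh σ z‖ = (Real.sqrt (‖z‖))⁻¹ := by
  have habs : ‖Complex.exp (-(σ:ℂ) * Complex.I) * z‖ = ‖z‖ := by
    rw [norm_mul]
    have : (-(σ:ℂ) * Complex.I) = ((-σ : ℝ) : ℂ) * Complex.I := by push_cast; ring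
    rw [this, Complex.norm_exp_ofReal_mul_I, one_mul]
  have hre : ((-(1/2 : ℂ)) * Complex.log (Complex.exp (-(σ:ℂ) * Complex.I) * z)).re
      = -(Real.log (‖z‖) / 2) := by
    have := Complex.log_re (Complex.exp (-(σ:ℂ) * Complex.I) * z)
    simp only [Complex.mul_re, Complex.neg_re, Complex.neg_im] at *
    rw [this, habs]
    norm_num
    ring
  rw [BRh, Complex.norm_exp, hre]
  have h0 : (0:ℝ) < ‖z‖ := by simpa [norm_pos_iff] using hz
  exact BR_sqrt_exp _ h0

lemma BRh_re_pos (σ : ℝ) (z : ℂ)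
    (hz : Complex.exp (-(σ:ℂ) * Complex.I) * z ∈ Complex.slitPlane) :
    0 < (BRh σ z).re := by
  set w := Complex.exp (-(σ:ℂ) * Complex.I) * z with hw
  have him : ((-(1/2 : ℂ)) * Complex.log w).im = -(w.arg / 2) := by
    simp [Complex.log_im]
    ring
  rw [BRh, Complex.exp_re, him]
  apply mul_pos (Real.exp_pos _)
  apply Real.cos_pos_of_mem_Ioo
  constructor
  · have := Complex.arg_le_pi w
    have : w.arg ≠ Real.pi := Complex.slitPlane_arg_ne_pi hz
    have h2 := lt_of_le_of_ne (Complex.arg_le_pi w) this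
    nlinarith [Real.pi_pos]
  · have := Complex.neg_pi_lt_arg w
    nlinarith [Real.pi_pos]

lemma BRh_re_polar (σ r θ : ℝ) (hr : 0 < r) (h1 : -Real.pi < θ - σ) (h2 : θ - σ < Real.pi) :
    (BRh σ ((r:ℂ) * Complex.exp ((θ:ℂ) * Complex.I))).re
      = (Real.sqrt r)⁻¹ * Real.cos ((θ - σ)/2) := by
  rw [BRh, BR_rotate, BR_log_polar r (θ - σ) hr h1 h2.le]
  have : -(1/2 : ℂ) * ((Real.log r : ℂ) + (↑(θ - σ):ℂ) * Complex.I)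
      = (↑(-(Real.log r / 2)) : ℂ) + (↑(-((θ - σ)/2)) : ℂ) * Complex.I := by
    push_cast; ring
  rw [this, Complex.exp_re]
  simp [Real.cos_neg, BR_sqrt_exp r hr]

lemma BR_mem_slitPlane (σ r θ : ℝ) (hr : 0 < r) (h1 : -Real.pi < θ - σ) (h2 : θ - σ < Real.pi) :
    Complex.exp (-(σ:ℂ) * Complex.I) * ((r:ℂ) * Complex.exp ((θ:ℂ) * Complex.I))
      ∈ Complex.slitPlane := by
  rw [BR_rotate]
  rw [Complex.mem_slitPlane_iff]
  by_cases hs : Real.sin (θ - σ) = 0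
  · left
    have hφ : θ - σ = 0 := (Real.sin_eq_zero_iff_of_lt_of_lt h1 h2).mp hs
    simp [Complex.mul_re, Complex.exp_ofReal_mul_I_re, Complex.exp_ofReal_mul_I_im, hφ, hr]
  · right
    have : ((r:ℂ) * Complex.exp ((↑(θ - σ):ℂ) * Complex.I)).im = r * Real.sin (θ - σ) := by
      simp only [Complex.mul_im, Complex.ofReal_re, Complex.ofReal_im,
        Complex.exp_ofReal_mul_I_im, zero_mul, add_zero]
    rw [this]
    exact mul_ne_zero (ne_of_gt hr) hs

lemma BR_re_smul (t : ℝ) (w : ℂ) : ((t:ℂ) * w).re = t * w.re := by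
  simp [Complex.mul_re]

lemma BR_abs_exp_neg_mul (t : ℝ) (w : ℂ) :
    ‖Complex.exp (-((t:ℂ) * w))‖ = Real.exp (-(t * w.re)) := by
  rw [Complex.norm_exp, Complex.neg_re, BR_re_smul]

lemma BR_exp_neg_le (k : ℕ) (s : ℝ) (hs : 0 < s) :
    Real.exp (-s) ≤ (Nat.factorial k : ℝ) / s ^ k := by
  rw [Real.exp_neg]
  have h1 := Real.pow_div_factorial_le_exp (x := s) hs.le k
  have hf : (0:ℝ) < (Nat.factorial k : ℝ) := by positivity
  rw [div_le_iff₀ hf] at h1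
  rw [inv_le_iff_one_le_mul₀ (Real.exp_pos s)]
  rw [div_mul_eq_mul_div, le_div_iff₀ (by positivity : (0:ℝ) < s ^ k)]
  nlinarith [Real.exp_pos s]

end BRaux



/-- The open sector `S(a,b,ρ) = {r·e^{iθ} : 0 < r < ρ, a < θ < b}`. -/
def Sector (a b ρ : ℝ) : Set ℂ :=
  {z | ∃ r θ : ℝ, 0 < r ∧ r < ρ ∧ a < θ ∧ θ < b ∧ z = r * Complex.exp (θ * Complex.I)}

/-- The closed subsector `W(a',b',ρ') = {r·e^{iθ} : 0 < r ≤ ρ', a' ≤ θ ≤ b'}`. -/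
def ClosedSubsector (a' b' ρ' : ℝ) : Set ℂ :=
  {z | ∃ r θ : ℝ, 0 < r ∧ r ≤ ρ' ∧ a' ≤ θ ∧ θ ≤ b' ∧ z = r * Complex.exp (θ * Complex.I)}

/-- `∑ cₙ zⁿ` is an asymptotic expansion of `f` on the sector `S(a,b,ρ)`. -/
def IsAsymptoticExpansion (f : ℂ → ℂ) (a b ρ : ℝ) (c : ℕ → ℂ) : Prop :=
  ∀ a' b' ρ' : ℝ, a < a' → a' ≤ b' → b' < b → 0 < ρ' → ρ' < ρ →
    ∀ N : ℕ, ∃ C : ℝ, ∀ z ∈ ClosedSubsector a' b' ρ',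
      ‖f z - ∑ n ∈ Finset.range N, c n * z ^ n‖ ≤ C * ‖z‖ ^ N

set_option maxHeartbeats 2000000 in
/-- Borel–Ritt: on a sector of opening less than `2π`, every formal power series is
the asymptotic expansion of some analytic function. -/
theorem borel_ritt
    (a b : ℝ) (hab : a < b) (hopening : b - a < 2 * Real.pi) (c : ℕ → ℂ) :
    ∃ ρ : ℝ, 0 < ρ ∧ ∃ f : ℂ → ℂ,
      AnalyticOnNhd ℂ f (Sector a b ρ) ∧ IsAsymptoticExpansion f a b ρ c := by
  classical
  set σ : ℝ := (a + b) / 2 with hσdef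
  have haσ : -Real.pi < a - σ := by rw [hσdef]; nlinarith
  have hbσ : b - σ < Real.pi := by rw [hσdef]; nlinarith
  set bc : ℕ → ℝ := fun n => (1/2)^n / (‖c n‖ + 1) with hbcdef
  have hbcpos : ∀ n, 0 < bc n := fun n => by
    apply div_pos (by positivity) (by positivity)
  have hbcle : ∀ n, ‖c n‖ * bc n ≤ (1/2)^n := by
    intro n
    rw [hbcdef]
    have h1 : (0:ℝ) < ‖c n‖ + 1 := by positivity
    rw [mul_div_assoc', div_le_iff₀ h1]
    have : ‖c n‖ ≤ ‖c n‖ + 1 := by linarith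
    calc ‖c n‖ * (1/2)^n ≤ (‖c n‖ + 1) * (1/2)^n := by
          gcongr <;> linarith
    _ = (1/2)^n * (‖c n‖ + 1) := mul_comm _ _
  set u : ℕ → ℂ → ℂ := fun n z => c n * z ^ n * (1 - Complex.exp (-((bc n : ℂ) * BRh σ z)))
    with hudef
  set V : Set ℂ :=
    {z | Complex.exp (-(σ:ℂ) * Complex.I) * z ∈ Complex.slitPlane} ∩ Metric.ball 0 1 with hVdef
  have hVopen : IsOpen V := by
    apply IsOpen.inter _ Metric.isOpen_ball
    exact Complex.isOpen_slitPlane.preimage (by continuity)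
  have hVslit : ∀ z ∈ V, Complex.exp (-(σ:ℂ) * Complex.I) * z ∈ Complex.slitPlane :=
    fun z hz => hz.1
  have hVne : ∀ z ∈ V, z ≠ 0 := by
    intro z hz h0
    apply Complex.slitPlane_ne_zero (hVslit z hz)
    rw [h0, mul_zero]
  have hVabs : ∀ z ∈ V, ‖z‖ < 1 := by
    intro z hz
    have := hz.2
    rwa [Metric.mem_ball, dist_zero_right] at this
  -- norm of u
  have hunorm : ∀ n z, ‖u n z‖ = ‖c n‖ * ‖z‖ ^ n *
      ‖1 - Complex.exp (-((bc n : ℂ) * BRh σ z))‖ := by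
    intro n z
    rw [hudef]
    simp [norm_mul, norm_pow]
  -- basic bounds on V
  have hbd2 : ∀ n z, z ∈ V →
      ‖1 - Complex.exp (-((bc n : ℂ) * BRh σ z))‖ ≤ 2 := by
    intro n z hz
    apply BR_one_sub_exp_neg_le_two
    rw [BR_re_smul]
    exact mul_nonneg (hbcpos n).le (BRh_re_pos σ z (hVslit z hz)).le
  have hbdw : ∀ n z, z ∈ V →
      ‖1 - Complex.exp (-((bc n : ℂ) * BRh σ z))‖
        ≤ bc n * (Real.sqrt (‖z‖))⁻¹ := by
    intro n z hz
    calc ‖1 - Complex.exp (-((bc n : ℂ) * BRh σ z))‖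
        ≤ ‖(bc n : ℂ) * BRh σ z‖ := by
          apply BR_one_sub_exp_neg_le
          rw [BR_re_smul]
          exact mul_nonneg (hbcpos n).le (BRh_re_pos σ z (hVslit z hz)).le
    _ = bc n * (Real.sqrt (‖z‖))⁻¹ := by
          rw [norm_mul, Complex.norm_real, Real.norm_eq_abs, _root_.abs_of_nonneg (hbcpos n).le,
            BRh_abs σ z (hVne z hz)]
  -- sqrt facts on V
  have hsq : ∀ z ∈ V, ‖z‖ ≤ Real.sqrt (‖z‖) := by
    intro z hz
    have h0 : (0:ℝ) ≤ ‖z‖ := norm_nonneg _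
    nlinarith [Real.sq_sqrt h0, Real.sqrt_nonneg (‖z‖), hVabs z hz,
      Real.sqrt_le_one.2 (hVabs z hz).le]
  -- M-test bound
  set M : ℕ → ℝ := fun n => if n = 0 then 2 * ‖c 0‖ else (1/2)^n with hMdef
  have hbV : ∀ n z, z ∈ V → ‖u n z‖ ≤ M n := by
    intro n z hz
    rw [hunorm]
    rcases Nat.eq_zero_or_pos n with hn | hn
    · subst hn
      simp only [hMdef, if_true, pow_zero, mul_one]
      calc ‖c 0‖ * ‖1 - Complex.exp (-((bc 0 : ℂ) * BRh σ z))‖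
          ≤ ‖c 0‖ * 2 := by
            gcongr
            exact hbd2 0 z hz
      _ = 2 * ‖c 0‖ := by ring
    · have hn0 : n ≠ 0 := Nat.pos_iff_ne_zero.mp hn
      simp only [hMdef, hn0, if_false]
      have h0 : (0:ℝ) ≤ ‖z‖ := norm_nonneg _
      have hs0 : 0 ≤ Real.sqrt (‖z‖) := Real.sqrt_nonneg _
      calc ‖c n‖ * ‖z‖ ^ n *
            ‖1 - Complex.exp (-((bc n : ℂ) * BRh σ z))‖
          ≤ ‖c n‖ * ‖z‖ ^ n * (bc n * (Real.sqrt (‖z‖))⁻¹) := by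
            gcongr
            exact hbdw n z hz
      _ = (‖c n‖ * bc n) * (‖z‖ ^ n * (Real.sqrt (‖z‖))⁻¹) := by
            ring
      _ ≤ (1/2)^n * 1 := by
            apply mul_le_mul (hbcle n) _ (by positivity) (by positivity)
            rcases eq_or_lt_of_le h0 with h | h
            · simp [← h, zero_pow hn0]
            · have hslt : 0 < Real.sqrt (‖z‖) := Real.sqrt_pos.mpr h
              rw [mul_inv_le_iff₀ hslt, one_mul]
              calc ‖z‖ ^ n ≤ ‖z‖ := by
                    apply pow_le_of_le_one h0 (hVabs z hz).le hn0
              _ ≤ Real.sqrt (‖z‖) := hsq z hz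
      _ = (1/2)^n := mul_one _
  have hMsummable : Summable M := by
    apply Summable.of_nonneg_of_le _ _
      (((summable_geometric_of_lt_one (by norm_num) (by norm_num : (1/2 : ℝ) < 1))).mul_left
        (2 * ‖c 0‖ + 1))
    · intro n
      rw [hMdef]
      by_cases h : n = 0 <;> simp only [h, if_true, if_false] <;> positivity
    · intro n
      rw [hMdef]
      by_cases h : n = 0
      · simp only [h, if_true, pow_zero, mul_one]
        linarith [norm_nonneg (c 0)]
      · simp only [h, if_false]
        calc ((1:ℝ)/2)^n ≤ 1 * (1/2)^n := by norm_num
        _ ≤ (2 * ‖c 0‖ + 1) * (1/2)^n := by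
            gcongr
            linarith [norm_nonneg (c 0)]
  have hNormSummableV : ∀ z ∈ V, Summable fun n => ‖u n z‖ := by
    intro z hz
    exact Summable.of_nonneg_of_le (fun n => norm_nonneg _) (fun n => hbV n z hz) hMsummable
  have hSummableU : ∀ z ∈ V, Summable fun n => u n z :=
    fun z hz => (hNormSummableV z hz).of_norm
  set f : ℂ → ℂ := fun z => ∑' n, u n z with hfdef
  -- differentiability of each u n on V
  have hdiffU : ∀ n : ℕ, DifferentiableOn ℂ (u n) V := by
    intro n
    intro z hz
    apply DifferentiableAt.differentiableWithinAt
    have hlog : DifferentiableAt ℂ (fun w : ℂ => Complex.log (Complex.exp (-(σ:ℂ) * Complex.I) * w)) z := by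
      apply (Complex.differentiableAt_log (hVslit z hz)).comp
      exact (differentiable_id.const_mul _).differentiableAt
    have hBRh : DifferentiableAt ℂ (fun w : ℂ => BRh σ w) z := by
      simp only [BRh]
      exact (hlog.const_mul (-(1/2 : ℂ))).cexp
    rw [hudef]
    apply DifferentiableAt.mul
    · exact ((differentiableAt_const _).mul (differentiableAt_pow n))
    · apply DifferentiableAt.sub (differentiableAt_const _)
      exact ((hBRh.const_mul ((bc n : ℂ))).neg).cexp
  -- f is differentiable on V
  have hdf : DifferentiableOn ℂ f V := by
    have htu : TendstoUniformlyOn (fun (t : Finset ℕ) z => ∑ n ∈ t, u n z) f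
        Filter.atTop V := tendstoUniformlyOn_tsum hMsummable hbV
    exact htu.tendstoLocallyUniformlyOn.differentiableOn
      (Filter.Eventually.of_forall fun t =>
        DifferentiableOn.fun_sum fun n _ => hdiffU n) hVopen
  -- sector inclusion
  have hsub : Sector a b 1 ⊆ V := by
    rintro z ⟨r, θ, hr0, hr1, hθa, hθb, rfl⟩
    constructor
    · exact BR_mem_slitPlane σ r θ hr0 (by linarith) (by linarith)
    · rw [Metric.mem_ball, dist_zero_right, BR_abs_polar r θ hr0.le]
      exact hr1
  refine ⟨1, one_pos, f, ((hdf.analyticOnNhd hVopen).mono hsub), ?_⟩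
  -- asymptotic expansion
  intro a' b' ρ' ha' hab' hb' hρ'pos hρ'1 N
  set δ' : ℝ := max (σ - a') (b' - σ) with hδ'def
  have hδ'0 : 0 ≤ δ' := by
    rcases le_or_gt σ a' with h | h
    · exact le_trans (by linarith : (0:ℝ) ≤ b' - σ) (le_max_right _ _)
    · exact le_trans (by linarith : (0:ℝ) ≤ σ - a') (le_max_left _ _)
  have hδ'π : δ' < Real.pi := max_lt (by linarith) (by linarith)
  set ε : ℝ := Real.cos (δ'/2) with hεdef
  have hεpos : 0 < ε := by
    apply Real.cos_pos_of_mem_Ioo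
    constructor
    · linarith [Real.pi_pos]
    · linarith
  set K : ℕ → ℝ := fun n => ‖c n‖ * (Nat.factorial (2*(N-n)) : ℝ)
      / (bc n * ε)^(2*(N-n)) with hKdef
  refine ⟨(∑ n ∈ Finset.range N, K n) + (2 * ‖c N‖ + 1) * 2, ?_⟩
  rintro z ⟨r, θ, hr0, hrρ, hθa, hθb, rfl⟩
  set z : ℂ := (r:ℂ) * Complex.exp ((θ:ℂ) * Complex.I) with hzdef
  have hr1 : r < 1 := lt_of_le_of_lt hrρ hρ'1
  have hθσ1 : -Real.pi < θ - σ := by linarith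
  have hθσ2 : θ - σ < Real.pi := by linarith
  have hmemV : z ∈ V := by
    constructor
    · exact BR_mem_slitPlane σ r θ hr0 hθσ1 hθσ2
    · rw [Metric.mem_ball, dist_zero_right, hzdef,
        BR_abs_polar r θ hr0.le]
      exact hr1
  have habsz : ‖z‖ = r := by rw [hzdef]; exact BR_abs_polar r θ hr0.le
  -- sqrt facts
  set s : ℝ := Real.sqrt r with hsdef
  have hs0 : 0 < s := Real.sqrt_pos.mpr hr0
  have hs2 : s^2 = r := Real.sq_sqrt hr0.le
  have hs1 : s ≤ 1 := Real.sqrt_le_one.2 hr1.le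
  have hrs : r ≤ s := by nlinarith
  -- real part lower bound
  have hcos : ε ≤ Real.cos ((θ - σ)/2) := by
    have habs2 : |(θ - σ)/2| ≤ δ'/2 := by
      rw [abs_le]
      constructor
      · have : -(δ') ≤ θ - σ := by
          have := le_max_left (σ - a') (b' - σ)
          linarith [this]
        linarith
      · have : θ - σ ≤ δ' := by
          have := le_max_right (σ - a') (b' - σ)
          linarith [this]
        linarith
    calc ε = Real.cos (δ'/2) := rfl
    _ ≤ Real.cos |(θ - σ)/2| :=
        Real.cos_le_cos_of_nonneg_of_le_pi (abs_nonneg _) (by linarith [Real.pi_pos]) habs2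
    _ = Real.cos ((θ - σ)/2) := Real.cos_abs _
  have hre : (BRh σ z).re = s⁻¹ * Real.cos ((θ - σ)/2) := by
    rw [hzdef]
    exact BRh_re_polar σ r θ hr0 hθσ1 hθσ2
  have hre_ge : ε * s⁻¹ ≤ (BRh σ z).re := by
    rw [hre, mul_comm]
    gcongr
  -- split the sum
  have hsplit := Summable.sum_add_tsum_nat_add N (hSummableU z hmemV)
  have hfz : f z - ∑ n ∈ Finset.range N, c n * z ^ n
      = (∑ n ∈ Finset.range N, (u n z - c n * z ^ n)) + ∑' n, u (n + N) z := by
    rw [Finset.sum_sub_distrib, hfdef]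
    simp only []
    rw [← hsplit]
    ring
  rw [hfz]
  have htri : ‖(∑ n ∈ Finset.range N, (u n z - c n * z ^ n)) + ∑' n, u (n + N) z‖
      ≤ ‖∑ n ∈ Finset.range N, (u n z - c n * z ^ n)‖
        + ‖∑' n, u (n + N) z‖ := norm_add_le _ _
  -- head bound
  have hhead : ‖∑ n ∈ Finset.range N, (u n z - c n * z ^ n)‖
      ≤ (∑ n ∈ Finset.range N, K n) * r ^ N := by
    calc ‖∑ n ∈ Finset.range N, (u n z - c n * z ^ n)‖
        ≤ ∑ n ∈ Finset.range N, ‖u n z - c n * z ^ n‖ := by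
          simpa using
            norm_sum_le (Finset.range N) (fun n => u n z - c n * z ^ n)
    _ ≤ ∑ n ∈ Finset.range N, K n * r ^ N := by
        apply Finset.sum_le_sum
        intro n hn
        have hnN : n < N := Finset.mem_range.mp hn
        have hterm : u n z - c n * z ^ n
            = -(c n * z ^ n * Complex.exp (-((bc n : ℂ) * BRh σ z))) := by
          rw [hudef]; ring
        rw [hterm, norm_neg]
        rw [norm_mul, norm_mul, norm_pow, habsz, BR_abs_exp_neg_mul]
        set k : ℕ := 2*(N-n) with hkdef
        have hq : 0 < bc n * ε * s⁻¹ := by positivity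
        have hexp : Real.exp (-(bc n * (BRh σ z).re))
            ≤ (Nat.factorial k : ℝ) * r^(N-n) / (bc n * ε)^k := by
          calc Real.exp (-(bc n * (BRh σ z).re))
              ≤ Real.exp (-(bc n * ε * s⁻¹)) := by
                apply Real.exp_le_exp.mpr
                have : bc n * (ε * s⁻¹) ≤ bc n * (BRh σ z).re :=
                  mul_le_mul_of_nonneg_left hre_ge (hbcpos n).le
                nlinarith
          _ ≤ (Nat.factorial k : ℝ) / (bc n * ε * s⁻¹)^k := BR_exp_neg_le k _ hq
          _ = (Nat.factorial k : ℝ) * r^(N-n) / (bc n * ε)^k := by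
                have hsk : s ^ k = r^(N-n) := by rw [hkdef, pow_mul, hs2]
                have hpow : (bc n * ε * s⁻¹)^k = (bc n * ε)^k / s^k := by
                  rw [mul_pow, inv_pow, division_def]
                rw [hpow, hsk, div_div_eq_mul_div]
        calc ‖c n‖ * r ^ n * Real.exp (-(bc n * (BRh σ z).re))
            ≤ ‖c n‖ * r ^ n *
              ((Nat.factorial k : ℝ) * r^(N-n) / (bc n * ε)^k) := by
              gcongr
        _ = (‖c n‖ * (Nat.factorial k : ℝ) / (bc n * ε)^k) * (r^n * r^(N-n)) := by
              ring
        _ = K n * r ^ N := by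
              rw [hKdef]
              simp only []
              rw [← pow_add, Nat.add_sub_cancel' hnN.le, ← hkdef]
    _ = (∑ n ∈ Finset.range N, K n) * r ^ N := by rw [Finset.sum_mul]
  -- tail bound
  have htb : ∀ n : ℕ, ‖u (n + N) z‖ ≤ (2 * ‖c N‖ + 1) * (1/2)^n * r ^ N := by
    intro n
    cases n with
    | zero =>
      rw [hunorm, habsz]
      simp only [zero_add, pow_zero]
      calc ‖c N‖ * r ^ N *
            ‖1 - Complex.exp (-((bc N : ℂ) * BRh σ z))‖
          ≤ ‖c N‖ * r ^ N * 2 := by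
            gcongr
            exact hbd2 N z hmemV
      _ ≤ (2 * ‖c N‖ + 1) * 1 * r ^ N := by
            rw [mul_one]
            nlinarith [pow_pos hr0 N, norm_nonneg (c N)]
    | succ n =>
      set m : ℕ := n + 1 + N with hmdef
      rw [hunorm, habsz]
      have hbw := hbdw m z hmemV
      rw [habsz, ← hsdef] at hbw
      calc ‖c m‖ * r ^ m *
            ‖1 - Complex.exp (-((bc m : ℂ) * BRh σ z))‖
          ≤ ‖c m‖ * r ^ m * (bc m * s⁻¹) := by gcongr
      _ = (‖c m‖ * bc m) * (r^(n+1) * s⁻¹) * r ^ N := by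
            rw [hmdef, pow_add]
            ring
      _ ≤ ((1:ℝ)/2)^m * 1 * r ^ N := by
            have h1 : r^(n+1) * s⁻¹ ≤ 1 := by
              rw [mul_inv_le_iff₀ hs0, one_mul]
              calc r^(n+1) ≤ r := pow_le_of_le_one hr0.le hr1.le (Nat.succ_ne_zero n)
              _ ≤ s := hrs
            have h2 : (0:ℝ) ≤ r^(n+1) * s⁻¹ := by positivity
            gcongr
            exact hbcle m
      _ ≤ (2 * ‖c N‖ + 1) * (1/2)^(n+1) * r ^ N := by
            have h3 : ((1:ℝ)/2)^m ≤ (1/2)^(n+1) := by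
              apply pow_le_pow_of_le_one (by norm_num) (by norm_num)
              omega
            have h4 : (1:ℝ) ≤ 2 * ‖c N‖ + 1 := by
              linarith [norm_nonneg (c N)]
            rw [mul_one]
            calc ((1:ℝ)/2)^m * r ^ N ≤ (1/2)^(n+1) * r ^ N := by gcongr
            _ = 1 * ((1/2)^(n+1) * r ^ N) := (one_mul _).symm
            _ ≤ (2 * ‖c N‖ + 1) * ((1/2)^(n+1) * r ^ N) := by
                gcongr
            _ = (2 * ‖c N‖ + 1) * (1/2)^(n+1) * r ^ N := by ring
  have hTsummable : Summable (fun n : ℕ => (2 * ‖c N‖ + 1) * (1/2)^n * r ^ N) := by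
    exact ((summable_geometric_of_lt_one (by norm_num) (by norm_num : (1/2:ℝ) < 1)).mul_left
      (2 * ‖c N‖ + 1)).mul_right (r ^ N)
  have hNormSummableTail : Summable (fun n : ℕ => ‖u (n + N) z‖) :=
    Summable.of_nonneg_of_le (fun n => norm_nonneg _) htb hTsummable
  have htail : ‖∑' n, u (n + N) z‖
      ≤ (2 * ‖c N‖ + 1) * 2 * r ^ N := by
    calc ‖∑' n, u (n + N) z‖ = ‖∑' n, u (n + N) z‖ := rfl
    _ ≤ ∑' n, ‖u (n + N) z‖ := norm_tsum_le_tsum_norm hNormSummableTail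
    _ ≤ ∑' n : ℕ, (2 * ‖c N‖ + 1) * (1/2)^n * r ^ N :=
        Summable.tsum_le_tsum htb hNormSummableTail hTsummable
    _ = (2 * ‖c N‖ + 1) * 2 * r ^ N := by
        have : (fun n : ℕ => (2 * ‖c N‖ + 1) * (1/2)^n * r ^ N)
            = fun n : ℕ => ((2 * ‖c N‖ + 1) * r ^ N) * (1/2)^n := by
          funext n; ring
        rw [this, tsum_mul_left, tsum_geometric_two]
        ring
  rw [habsz]
  calc ‖(∑ n ∈ Finset.range N, (u n z - c n * z ^ n)) + ∑' n, u (n + N) z‖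
      ≤ (∑ n ∈ Finset.range N, K n) * r ^ N + (2 * ‖c N‖ + 1) * 2 * r ^ N := by
        refine le_trans htri ?_
        exact add_le_add hhead htail
  _ = ((∑ n ∈ Finset.range N, K n) + (2 * ‖c N‖ + 1) * 2) * r ^ N := by ring
end

section
/- (Watson's Lemma, uniqueness) Let k > 0 be a real number, let a < b be real numbers with b − a > π/k, and let f be analytic on the open sector S(a,b,ρ) for some ρ > 0. Suppose that for every closed subsector W of S(a,b,ρ) there exist constants A, B > 0 such that |f(z)| ≤ A·exp(−B·|z|^{−k}) for all z ∈ W. Then f is identically zero on S(a,b,ρ). (Equivalently, on sectors of opening greater than π/k, a Gevrey function of order k is determined by its asymptotic expansion.) -/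
open Complex Filter Set

lemma watson_cpow_polar (μ : ℝ) (u : ℂ) (hu : 0 < u.re) :
    u ^ (-μ : ℂ) = (‖u‖ ^ (-μ) : ℝ) *
      Complex.exp ((-μ * Complex.arg u : ℝ) * Complex.I) := by
  have h0 : u ≠ 0 := by
    intro h; rw [h] at hu; simp at hu
  have hlog : (-μ : ℂ) * Complex.log u =
      ((-μ * Real.log (‖u‖) : ℝ) : ℂ) + ((-μ * Complex.arg u : ℝ)) * Complex.I := by
    rw [Complex.log]; push_cast; ring
  rw [Complex.cpow_def_of_ne_zero h0, mul_comm (Complex.log u) (-μ:ℂ), hlog,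
    Complex.exp_add, ← Complex.ofReal_exp]
  congr 2
  rw [Real.rpow_def_of_pos (norm_pos_iff.mpr h0)]
  ring_nf

lemma watson_exp_atBot (n : ℕ) (B' s : ℝ) (hB' : 0 < B') (hs : 1 < s) :
    Tendsto (fun x : ℝ => (n : ℝ) * x - B' * (x + 1) ^ s) atTop atBot := by
  have h1 : Tendsto (fun y : ℝ => (n : ℝ) * y - B' * y ^ s) atTop atBot := by
    have heq : ∀ᶠ y in atTop, y * ((n : ℝ) - B' * y ^ (s - 1)) =
        (n : ℝ) * y - B' * y ^ s := by
      filter_upwards [eventually_gt_atTop 0] with y hy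
      have h : y * y ^ (s - 1) = y ^ s := by
        nth_rewrite 1 [← Real.rpow_one y]
        rw [← Real.rpow_add hy]; ring_nf
      calc y * ((n : ℝ) - B' * y ^ (s - 1)) = (n:ℝ) * y - B' * (y * y ^ (s-1)) := by ring
        _ = (n : ℝ) * y - B' * y ^ s := by rw [h]
    refine Tendsto.congr' heq ?_
    refine Tendsto.atTop_mul_atBot₀ tendsto_id ?_
    have : Tendsto (fun y : ℝ => B' * y ^ (s - 1)) atTop atTop :=
      (tendsto_rpow_atTop (by linarith)).const_mul_atTop hB'
    exact tendsto_atBot_add_const_left _ _ (tendsto_neg_atTop_atBot.comp this)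
  have h2 := h1.comp (tendsto_atTop_add_const_right atTop 1 tendsto_id)
  refine tendsto_atBot_mono (fun x => ?_) h2
  simp only [Function.comp, id]
  have : (0:ℝ) ≤ n := Nat.cast_nonneg n
  nlinarith [this]

/-- Watson's Lemma (uniqueness): a function analytic on a sector of opening greater
than `π/k` that decays like `exp(−B|z|^{−k})` on every closed subsector is
identically zero. -/
theorem watson_lemma_uniqueness
    (k : ℝ) (hk : 0 < k) (a b ρ : ℝ) (hab : a < b) (hρ : 0 < ρ)
    (hopening : b - a > Real.pi / k)
    (f : ℂ → ℂ) (hf : AnalyticOnNhd ℂ f (Sector a b ρ))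
    (hdecay : ∀ a' b' ρ' : ℝ, a < a' → a' ≤ b' → b' < b → 0 < ρ' → ρ' < ρ →
      ∃ A B : ℝ, 0 < A ∧ 0 < B ∧ ∀ z ∈ ClosedSubsector a' b' ρ',
        ‖f z‖ ≤ A * Real.exp (-B * ‖z‖ ^ (-k : ℝ))) :
    ∀ z ∈ Sector a b ρ, f z = 0 := by
  have hπ := Real.pi_pos
  -- choose the exponent μ with 1/k < μ < (b-a)/π
  have hμex : 1/k < (b-a)/Real.pi := by
    rw [div_lt_div_iff₀ hk hπ]
    have := (div_lt_iff₀ hk).mp hopening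
    linarith
  obtain ⟨μ, hμ1, hμ2⟩ := exists_between hμex
  have hμpos : 0 < μ := lt_trans (by positivity) hμ1
  have hμπ : μ * Real.pi < b - a := (lt_div_iff₀ hπ).mp hμ2
  have hμπ0 : 0 ≤ μ * Real.pi := mul_nonneg hμpos.le hπ.le
  have hs1 : 1 < μ * k := by
    have := (div_lt_iff₀ hk).mp hμ1; linarith
  -- the decay bound on the closed subsector
  obtain ⟨A, B, hA, hB, hbound⟩ :=
    hdecay ((a+b)/2 - μ*Real.pi/2) ((a+b)/2 + μ*Real.pi/2) (ρ/2)
      (by linarith) (by linarith) (by linarith) (by linarith) (by linarith)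
  -- the conformal map from the right half-plane into the sector
  set φ : ℂ → ℂ :=
    fun w => ((ρ/2 : ℝ) : ℂ) * (w+1) ^ (-μ : ℂ) *
      Complex.exp ((((a+b)/2 : ℝ) : ℂ) * Complex.I) with hφdef
  have hupos : ∀ w : ℂ, 0 ≤ w.re → 0 < (w+1).re := by
    intro w hw; simp only [Complex.add_re, Complex.one_re]; linarith
  have hpolar : ∀ w : ℂ, 0 ≤ w.re →
      φ w = ((ρ/2 * ‖w+1‖ ^ (-μ) : ℝ) : ℂ) *
        Complex.exp ((((a+b)/2 - μ * Complex.arg (w+1)) : ℝ) * Complex.I) := by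
    intro w hw
    rw [hφdef]
    simp only
    rw [watson_cpow_polar μ (w+1) (hupos w hw), Complex.ofReal_mul,
      show ((((a+b)/2 - μ * Complex.arg (w+1)) : ℝ) : ℂ) * Complex.I =
        ((-μ * Complex.arg (w+1) : ℝ) : ℂ) * Complex.I + (((a+b)/2 : ℝ) : ℂ) * Complex.I by
          push_cast; ring,
      Complex.exp_add]
    push_cast
    ring
  have habs1 : ∀ w : ℂ, 0 ≤ w.re → 1 ≤ ‖w+1‖ := by
    intro w hw
    calc (1:ℝ) ≤ (w+1).re := by simp only [Complex.add_re, Complex.one_re]; linarith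
      _ ≤ ‖w+1‖ := Complex.re_le_norm _
  have hrpos : ∀ w : ℂ, 0 ≤ w.re → 0 < ρ/2 * ‖w+1‖ ^ (-μ) := by
    intro w hw
    exact mul_pos (by linarith) (Real.rpow_pos_of_pos (lt_of_lt_of_le one_pos (habs1 w hw)) _)
  have hrle : ∀ w : ℂ, 0 ≤ w.re → ρ/2 * ‖w+1‖ ^ (-μ) ≤ ρ/2 := by
    intro w hw
    have h1 : ‖w+1‖ ^ (-μ) ≤ 1 :=
      Real.rpow_le_one_of_one_le_of_nonpos (habs1 w hw) (by linarith)
    nlinarith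
  have hmem : ∀ w : ℂ, 0 ≤ w.re →
      φ w ∈ ClosedSubsector ((a+b)/2 - μ*Real.pi/2) ((a+b)/2 + μ*Real.pi/2) (ρ/2) ∧
      φ w ∈ Sector a b ρ := by
    intro w hw
    have hargw : |Complex.arg (w+1)| < Real.pi/2 :=
      Complex.abs_arg_lt_pi_div_two_iff.mpr (Or.inl (hupos w hw))
    obtain ⟨hg1, hg2⟩ := abs_lt.mp hargw
    have hm1 : μ * Complex.arg (w+1) < μ * (Real.pi/2) := by
      exact mul_lt_mul_of_pos_left hg2 hμpos
    have hm2 : μ * (-(Real.pi/2)) < μ * Complex.arg (w+1) := by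
      exact mul_lt_mul_of_pos_left hg1 hμpos
    constructor
    · exact ⟨_, _, hrpos w hw, hrle w hw, by nlinarith, by nlinarith, hpolar w hw⟩
    · refine ⟨_, _, hrpos w hw, by linarith [hrle w hw], by nlinarith, by nlinarith, hpolar w hw⟩
  have habsφ : ∀ w : ℂ, 0 ≤ w.re →
      ‖φ w‖ = ρ/2 * ‖w+1‖ ^ (-μ) := by
    intro w hw
    rw [hpolar w hw, norm_mul, Complex.norm_exp, Complex.norm_real, Real.norm_eq_abs]
    have : ((((a+b)/2 - μ * Complex.arg (w+1)) : ℝ) * Complex.I).re = 0 := by simp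
    rw [this, Real.exp_zero, mul_one, abs_of_pos (hrpos w hw)]
  have hfb : ∀ w : ℂ, 0 ≤ w.re → ‖f (φ w)‖ ≤
      A * Real.exp (-B * (ρ/2 * ‖w+1‖ ^ (-μ)) ^ (-k)) := by
    intro w hw
    have := hbound _ (hmem w hw).1
    rwa [habsφ w hw] at this
  have hfA : ∀ w : ℂ, 0 ≤ w.re → ‖f (φ w)‖ ≤ A := by
    intro w hw
    refine le_trans (hfb w hw) ?_
    have h1 : Real.exp (-B * (ρ/2 * ‖w+1‖ ^ (-μ)) ^ (-k)) ≤ 1 := by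
      rw [Real.exp_le_one_iff]
      have := Real.rpow_pos_of_pos (hrpos w hw) (-k)
      nlinarith
    nlinarith
  have hφdiff : ∀ w : ℂ, 0 ≤ w.re → DifferentiableAt ℂ φ w := by
    intro w hw
    have hu : (w+1) ∈ Complex.slitPlane := Or.inl (hupos w hw)
    exact (((differentiableAt_id.add_const 1).cpow (differentiableAt_const _) hu).const_mul
      _).mul_const _
  have hgd : DiffContOnCl ℂ (f ∘ φ) {z : ℂ | 0 < z.re} := by
    refine DifferentiableOn.diffContOnCl ?_
    rw [closure_setOf_lt_re]
    intro w hw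
    exact ((hf _ (hmem w hw).2).differentiableAt.comp w (hφdiff w hw)).differentiableWithinAt
  have hzero : Set.EqOn (f ∘ φ) 0 {z : ℂ | 0 ≤ z.re} := by
    refine PhragmenLindelof.eq_zero_on_right_half_plane_of_superexponential_decay hgd
      ⟨1, one_lt_two, 0, ?_⟩ ?_ ⟨A, fun x => ?_⟩
    · refine Asymptotics.IsBigO.of_bound A ?_
      rw [Filter.eventually_inf_principal]
      refine Filter.Eventually.of_forall (fun w hw => ?_)
      have : ‖Real.exp (0 * ‖w‖ ^ (1:ℝ))‖ = 1 := by simp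
      rw [this, mul_one]
      exact hfA w (le_of_lt hw)
    · intro n
      set B' : ℝ := B * (ρ/2) ^ (-k) with hB'def
      have hB' : 0 < B' := mul_pos hB (Real.rpow_pos_of_pos (by linarith) _)
      have hboundx : ∀ x : ℝ, 0 ≤ x →
          ‖(f ∘ φ) (x : ℂ)‖ ≤ A * Real.exp (-B' * (x+1) ^ (μ*k)) := by
        intro x hx
        have hre : (0:ℝ) ≤ (x:ℂ).re := by simpa using hx
        have habs : ‖(x:ℂ)+1‖ = x + 1 := by
          rw [show ((x:ℂ)+1) = ((x+1 : ℝ) : ℂ) by push_cast; ring, Complex.norm_real, Real.norm_eq_abs]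
          exact abs_of_nonneg (by linarith)
        have hr : (ρ/2 * ‖(x:ℂ)+1‖ ^ (-μ)) ^ (-k)
            = (ρ/2) ^ (-k) * (x+1) ^ (μ*k) := by
          rw [habs, Real.mul_rpow (by linarith) (Real.rpow_nonneg (by linarith) _),
            ← Real.rpow_mul (by linarith), show (-μ) * (-k) = μ * k by ring]
        have := hfb (x : ℂ) hre
        rw [hr] at this
        simpa [hB'def, Function.comp, mul_assoc] using this
      refine squeeze_zero' (Filter.Eventually.of_forall fun x => by positivity)
        ?_ ?_ (g := fun x : ℝ => Real.exp x ^ n * (A * Real.exp (-B' * (x+1) ^ (μ*k))))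
      · filter_upwards [eventually_ge_atTop (0:ℝ)] with x hx
        have := hboundx x hx
        have h2 : (0:ℝ) ≤ Real.exp x ^ n := by positivity
        exact mul_le_mul_of_nonneg_left this h2
      · have heq : (fun x : ℝ => Real.exp x ^ n * (A * Real.exp (-B' * (x+1) ^ (μ*k))))
            = fun x : ℝ => A * Real.exp ((n:ℝ)*x - B' * (x+1) ^ (μ*k)) := by
          funext x
          rw [← Real.exp_nat_mul,
            show Real.exp ((n:ℝ)*x) * (A * Real.exp (-B' * (x+1) ^ (μ*k)))
              = A * (Real.exp ((n:ℝ)*x) * Real.exp (-B' * (x+1) ^ (μ*k))) from by ring,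
            ← Real.exp_add]
          ring_nf
        rw [heq]
        have := (Real.tendsto_exp_atBot.comp (watson_exp_atBot n B' (μ*k) hB' hs1)).const_mul A
        simpa using this
    · have hre : (0:ℝ) ≤ ((x : ℂ) * Complex.I).re := by simp
      exact hfA _ hre
  -- f vanishes on the central ray
  have hray : ∀ r : ℝ, 0 < r → r ≤ ρ/2 →
      f ((r:ℂ) * Complex.exp ((((a+b)/2 : ℝ):ℂ) * Complex.I)) = 0 := by
    intro r hr hrle2
    have hq : (1:ℝ) ≤ ρ/2/r := by rw [le_div_iff₀ hr]; linarith
    have hqpos : (0:ℝ) < ρ/2/r := by positivity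
    set x : ℝ := (ρ/2/r) ^ (1/μ) - 1 with hxdef
    have hx1 : (1:ℝ) ≤ (ρ/2/r) ^ (1/μ) := by
      calc (1:ℝ) = 1 ^ (1/μ) := (Real.one_rpow _).symm
        _ ≤ (ρ/2/r) ^ (1/μ) := Real.rpow_le_rpow (by norm_num) hq (by positivity)
    have hx0 : 0 ≤ x := by rw [hxdef]; linarith
    have hkey : φ ((x:ℝ):ℂ) = (r:ℂ) * Complex.exp ((((a+b)/2 : ℝ):ℂ) * Complex.I) := by
      rw [hφdef]
      simp only
      have h1 : ((x:ℝ):ℂ) + 1 = ((((ρ/2/r) ^ (1/μ)) : ℝ) : ℂ) := by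
        rw [hxdef]; push_cast; ring
      rw [h1, show (-(μ:ℂ)) = ((-μ : ℝ) : ℂ) from by push_cast; ring,
        ← Complex.ofReal_cpow (by positivity) (-μ)]
      have h2 : ((ρ/2/r) ^ (1/μ)) ^ (-μ) = r / (ρ/2) := by
        rw [← Real.rpow_mul hqpos.le, show (1/μ) * (-μ) = -1 by field_simp,
          Real.rpow_neg_one]
        field_simp
      rw [h2]
      congr 1
      push_cast
      field_simp [Complex.ofReal_ne_zero.mpr hρ.ne']
    have hmemx : ((x:ℝ):ℂ) ∈ {z : ℂ | 0 ≤ z.re} := by simpa using hx0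
    have := hzero hmemx
    rw [Function.comp_apply, hkey] at this
    exact this
  -- the sector is preconnected
  have hconn : IsPreconnected (Sector a b ρ) := by
    have himg : Sector a b ρ = (fun p : ℝ × ℝ => (p.1 : ℂ) * Complex.exp ((p.2:ℂ) * Complex.I))
        '' (Set.Ioo 0 ρ ×ˢ Set.Ioo a b) := by
      ext z
      constructor
      · rintro ⟨r, θ, h1, h2, h3, h4, h5⟩
        exact ⟨(r, θ), ⟨⟨h1, h2⟩, ⟨h3, h4⟩⟩, h5.symm⟩
      · rintro ⟨⟨r, θ⟩, ⟨⟨h1, h2⟩, ⟨h3, h4⟩⟩, h5⟩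
        exact ⟨r, θ, h1, h2, h3, h4, h5.symm⟩
    rw [himg]
    refine (((convex_Ioo (0:ℝ) ρ).prod (convex_Ioo a b)).isPreconnected).image _ ?_
    refine Continuous.continuousOn ?_
    exact (Complex.continuous_ofReal.comp continuous_fst).mul
      (Complex.continuous_exp.comp
        ((Complex.continuous_ofReal.comp continuous_snd).mul continuous_const))
  -- the base point on the ray
  have hz₀mem : ((ρ/4 : ℝ):ℂ) * Complex.exp ((((a+b)/2 : ℝ):ℂ) * Complex.I) ∈ Sector a b ρ :=
    ⟨ρ/4, (a+b)/2, by linarith, by linarith, by linarith, by linarith, rfl⟩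
  have hfreq : ∃ᶠ z in nhdsWithin (((ρ/4 : ℝ):ℂ) * Complex.exp ((((a+b)/2 : ℝ):ℂ) * Complex.I))
      {(((ρ/4 : ℝ):ℂ) * Complex.exp ((((a+b)/2 : ℝ):ℂ) * Complex.I))}ᶜ, f z = 0 := by
    have hm : Tendsto (fun r : ℝ => (r:ℂ) * Complex.exp ((((a+b)/2 : ℝ):ℂ) * Complex.I))
        (nhdsWithin (ρ/4) {(ρ/4 : ℝ)}ᶜ)
        (nhdsWithin (((ρ/4 : ℝ):ℂ) * Complex.exp ((((a+b)/2 : ℝ):ℂ) * Complex.I))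
          {(((ρ/4 : ℝ):ℂ) * Complex.exp ((((a+b)/2 : ℝ):ℂ) * Complex.I))}ᶜ) := by
      rw [tendsto_nhdsWithin_iff]
      constructor
      · refine Filter.Tendsto.mono_left ?_ nhdsWithin_le_nhds
        exact ((Complex.continuous_ofReal.mul continuous_const).tendsto (ρ/4))
      · filter_upwards [self_mem_nhdsWithin] with r hr
        intro hcon
        apply hr
        have := mul_right_cancel₀ (Complex.exp_ne_zero _) hcon
        exact_mod_cast this
    refine hm.frequently ?_
    have hev : ∀ᶠ r : ℝ in nhdsWithin (ρ/4) {(ρ/4 : ℝ)}ᶜ,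
        f ((r:ℂ) * Complex.exp ((((a+b)/2 : ℝ):ℂ) * Complex.I)) = 0 := by
      have hoo : Set.Ioo (0:ℝ) (ρ/2) ∈ nhds (ρ/4 : ℝ) :=
        isOpen_Ioo.mem_nhds ⟨by linarith, by linarith⟩
      filter_upwards [nhdsWithin_le_nhds hoo] with r hr
      exact hray r hr.1 hr.2.le
    exact hev.frequently
  have hEq := hf.eqOn_zero_of_preconnected_of_frequently_eq_zero hconn hz₀mem hfreq
  intro z hz
  exact hEq hz
end

section
/- Let k > 0 be real and let f be analytic on the open sector S(a,b,ρ). Then the following are equivalent: (1) f is Gevrey of order k with asymptotic expansion 0, i.e. for every closed subsector W of S(a,b,ρ) there exist A > 0 and c > 0 such that for all N ≥ 1 and all z ∈ W with |z| ≤ c one has |f(z)| ≤ A^N·(N!)^{1/k}·|z|^N; (2) for every closed subsector W of S(a,b,ρ) there exist A, B > 0 such that |f(z)| ≤ A·exp(−B·|z|^{−k}) for all z ∈ W. -/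
lemma abs_mul_exp (r θ : ℝ) (hr : 0 ≤ r) :
    ‖(r : ℂ) * Complex.exp (θ * Complex.I)‖ = r := by
  rw [norm_mul, Complex.norm_exp]
  simp [abs_of_nonneg hr]

lemma sub_mem_sector {a a' b' b ρ' ρ : ℝ} (haa : a < a') (hbb : b' < b) (hρ : ρ' < ρ)
    {z : ℂ} (hz : z ∈ ClosedSubsector a' b' ρ') : z ∈ Sector a b ρ := by
  obtain ⟨r, θ, hr, hrρ, h1, h2, rfl⟩ := hz
  exact ⟨r, θ, hr, lt_of_le_of_lt hrρ hρ, lt_of_lt_of_le haa h1, lt_of_le_of_lt h2 hbb, rfl⟩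

lemma sub_abs {a' b' ρ' : ℝ} {z : ℂ} (hz : z ∈ ClosedSubsector a' b' ρ') :
    0 < ‖z‖ ∧ ‖z‖ ≤ ρ' := by
  obtain ⟨r, θ, hr, hrρ, _, _, rfl⟩ := hz
  rw [abs_mul_exp r θ hr.le]
  exact ⟨hr, hrρ⟩

/-- `(N/e)^N ≤ N!` -/
lemma pow_div_exp_le_factorial (N : ℕ) :
    ((N : ℝ) / Real.exp 1) ^ N ≤ (N.factorial : ℝ) := by
  have h1 : (N : ℝ) ^ N / (N.factorial : ℝ) ≤ Real.exp N := by
    calc (N : ℝ) ^ N / (N.factorial : ℝ)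
        ≤ ∑ i ∈ Finset.range (N + 1), (N : ℝ) ^ i / (i.factorial : ℝ) := by
          refine Finset.single_le_sum (f := fun i => (N : ℝ) ^ i / (i.factorial : ℝ)) ?_ ?_
          · intro i _
            positivity
          · exact Finset.self_mem_range_succ N
      _ ≤ Real.exp N := Real.sum_le_exp_of_nonneg (Nat.cast_nonneg N) (N + 1)
  have hfac : (0 : ℝ) < (N.factorial : ℝ) := by exact_mod_cast N.factorial_pos
  have he : (0 : ℝ) < Real.exp 1 ^ N := by positivity
  rw [div_pow]
  rw [div_le_iff₀ he]
  rw [Real.exp_one_pow]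
  rw [div_le_iff₀ hfac] at h1
  linarith [h1]

/-- `t^s * e^{-B t} ≤ (s/(e B))^s` for positive `t, s, B`. -/
lemma rpow_mul_exp_le (t s B : ℝ) (ht : 0 < t) (hs : 0 < s) (hB : 0 < B) :
    t ^ s * Real.exp (-B * t) ≤ (s / (Real.exp 1 * B)) ^ s := by
  have key : t * Real.exp (-B * t / s) ≤ s / (Real.exp 1 * B) := by
    set y := B * t / s with hy
    have hy0 : 0 < y := by positivity
    have h1 : y ≤ Real.exp (y - 1) := by
      have := Real.add_one_le_exp (y - 1); linarith
    have h2 : y * Real.exp (1 - y) ≤ 1 := by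
      have := mul_le_mul_of_nonneg_right h1 (Real.exp_pos (1 - y)).le
      rwa [← Real.exp_add, show y - 1 + (1 - y) = 0 by ring, Real.exp_zero] at this
    have hrw : t * Real.exp (-B * t / s) = s / (Real.exp 1 * B) * (y * Real.exp (1 - y)) := by
      rw [Real.exp_sub, show -B * t / s = -y by rw [hy]; ring, Real.exp_neg]
      field_simp
      rw [hy]
      field_simp
    rw [hrw]
    calc s / (Real.exp 1 * B) * (y * Real.exp (1 - y)) ≤ s / (Real.exp 1 * B) * 1 := by
          apply mul_le_mul_of_nonneg_left h2; positivity
      _ = s / (Real.exp 1 * B) := mul_one _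
  calc t ^ s * Real.exp (-B * t)
      = (t * Real.exp (-B * t / s)) ^ s := by
        rw [Real.mul_rpow ht.le (Real.exp_pos _).le, ← Real.exp_mul, div_mul_cancel₀]
        exact hs.ne'
    _ ≤ (s / (Real.exp 1 * B)) ^ s :=
        Real.rpow_le_rpow (by positivity) key hs.le

/-- Bound for a continuous function on the compact part of a closed subsector. -/
lemma exists_compact_bound {a a' b' b ρ' ρ : ℝ} (haa : a < a') (hab : a' ≤ b')
    (hbb : b' < b) (hρ : ρ' < ρ) (c : ℝ) (hc : 0 < c) (hcρ : c ≤ ρ')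
    (f : ℂ → ℂ) (hf : ContinuousOn f (Sector a b ρ)) :
    ∃ M : ℝ, ∀ z ∈ ClosedSubsector a' b' ρ', c ≤ ‖z‖ → ‖f z‖ ≤ M := by
  set g : ℝ × ℝ → ℂ := fun p => (p.1 : ℂ) * Complex.exp (p.2 * Complex.I) with hg
  set K : Set ℂ := g '' (Set.Icc c ρ' ×ˢ Set.Icc a' b') with hK
  have hgc : Continuous g := by fun_prop
  have hKc : IsCompact K := ((isCompact_Icc.prod isCompact_Icc).image hgc)
  have hKsub : K ⊆ Sector a b ρ := by
    rintro z ⟨⟨r, θ⟩, ⟨⟨hr1, hr2⟩, ⟨hθ1, hθ2⟩⟩, rfl⟩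
    exact ⟨r, θ, hc.trans_le hr1, lt_of_le_of_lt hr2 hρ, lt_of_lt_of_le haa hθ1,
      lt_of_le_of_lt hθ2 hbb, rfl⟩
  obtain ⟨M, hM⟩ := hKc.exists_bound_of_continuousOn (hf.mono hKsub)
  refine ⟨M, ?_⟩
  rintro z ⟨r, θ, hr, hrρ, h1, h2, rfl⟩ hcz
  rw [abs_mul_exp r θ hr.le] at hcz
  have : (r : ℂ) * Complex.exp (θ * Complex.I) ∈ K :=
    ⟨(r, θ), ⟨⟨hcz, hrρ⟩, ⟨h1, h2⟩⟩, rfl⟩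
  simpa using hM _ this

/-- A function analytic on a sector is Gevrey of order `k` with asymptotic expansion
`0` if and only if, on every closed subsector, it decays like `A·exp(−B|z|^{−k})`. -/
theorem gevrey_flat_iff_exponential_decay
    (k : ℝ) (hk : 0 < k) (a b ρ : ℝ) (hab : a < b) (hρ : 0 < ρ)
    (f : ℂ → ℂ) (hf : AnalyticOnNhd ℂ f (Sector a b ρ)) :
    (∀ a' b' ρ' : ℝ, a < a' → a' ≤ b' → b' < b → 0 < ρ' → ρ' < ρ →
      ∃ A c₀ : ℝ, 0 < A ∧ 0 < c₀ ∧
        ∀ N : ℕ, 1 ≤ N → ∀ z ∈ ClosedSubsector a' b' ρ', ‖z‖ ≤ c₀ →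
          ‖f z‖ ≤ A ^ N * (N.factorial : ℝ) ^ ((1 : ℝ) / k) * ‖z‖ ^ N)
    ↔
    (∀ a' b' ρ' : ℝ, a < a' → a' ≤ b' → b' < b → 0 < ρ' → ρ' < ρ →
      ∃ A B : ℝ, 0 < A ∧ 0 < B ∧ ∀ z ∈ ClosedSubsector a' b' ρ',
        ‖f z‖ ≤ A * Real.exp (-B * ‖z‖ ^ (-k : ℝ))) := by
  constructor
  · -- Gevrey flat ⇒ exponential decay
    intro h a' b' ρ' haa hab' hbb hρ' hρρ
    obtain ⟨A, c₀, hA, hc₀, hG⟩ := h a' b' ρ' haa hab' hbb hρ' hρρ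
    set c₂ : ℝ := min (min c₀ (2 * A)⁻¹) ρ' with hc₂def
    have hc₂ : 0 < c₂ := lt_min (lt_min hc₀ (by positivity)) hρ'
    set B : ℝ := Real.log 2 * (2 * A) ^ (-k : ℝ) with hBdef
    have hlog2 : (0:ℝ) < Real.log 2 := Real.log_pos (by norm_num)
    have h2A : (0:ℝ) < (2 * A) ^ (-k : ℝ) := Real.rpow_pos_of_pos (by positivity) _
    have hB : 0 < B := by positivity
    obtain ⟨M, hM⟩ := exists_compact_bound haa hab' hbb hρρ c₂ hc₂ (min_le_right _ _) f
      hf.continuousOn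
    refine ⟨max 2 (max M 1 * Real.exp (B * c₂ ^ (-k : ℝ))), B, by positivity, hB, ?_⟩
    intro z hz
    obtain ⟨hz0, hzρ⟩ := sub_abs hz
    set x := ‖z‖ with hx
    rcases le_or_gt x c₂ with hcase | hcase
    · -- small |z| : use the Gevrey bound with optimal N
      have hxq : x ≤ (2 * A)⁻¹ :=
        hcase.trans ((min_le_left _ _).trans (min_le_right _ _))
      have hxc₀ : x ≤ c₀ := hcase.trans ((min_le_left _ _).trans (min_le_left _ _))
      have hu0 : 0 < 2 * A * x := by positivity
      have hu1 : 2 * A * x ≤ 1 := by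
        calc 2 * A * x ≤ 2 * A * (2 * A)⁻¹ :=
              mul_le_mul_of_nonneg_left hxq (by positivity)
          _ = 1 := by field_simp
      set t : ℝ := (2 * A * x) ^ (-k : ℝ) with htdef
      have ht1 : (1:ℝ) ≤ t :=
        Real.one_le_rpow_of_pos_of_le_one_of_nonpos hu0 hu1 (by linarith)
      set N := ⌊t⌋₊ with hNdef
      have hN1 : 1 ≤ N := Nat.le_floor (by exact_mod_cast ht1)
      have hNt : (N:ℝ) ≤ t := Nat.floor_le (by linarith)
      have htN : t < N + 1 := Nat.lt_floor_add_one t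
      have hG1 := hG N hN1 z hz hxc₀
      have hfact : ((N.factorial : ℝ)) ^ ((1:ℝ)/k) ≤ ((N:ℝ) ^ ((1:ℝ)/k)) ^ N := by
        have h1 : (N.factorial : ℝ) ≤ (N:ℝ) ^ N := by exact_mod_cast Nat.factorial_le_pow N
        calc ((N.factorial : ℝ)) ^ ((1:ℝ)/k) ≤ ((N:ℝ) ^ N) ^ ((1:ℝ)/k) :=
              Real.rpow_le_rpow (by positivity) h1 (by positivity)
          _ = ((N:ℝ) ^ ((1:ℝ)/k)) ^ N := by
              rw [← Real.rpow_natCast ((N:ℝ) ^ ((1:ℝ)/k)) N,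
                ← Real.rpow_natCast (N:ℝ) N, ← Real.rpow_mul (Nat.cast_nonneg N),
                ← Real.rpow_mul (Nat.cast_nonneg N), mul_comm]
      have htk : t ^ ((1:ℝ)/k) = (2 * A * x)⁻¹ := by
        rw [htdef, ← Real.rpow_mul hu0.le, show (-k) * ((1:ℝ)/k) = -1 by field_simp,
          Real.rpow_neg_one]
      have hbase : A * ((N:ℝ) ^ ((1:ℝ)/k)) * x ≤ 1/2 := by
        have hNk : (N:ℝ) ^ ((1:ℝ)/k) ≤ t ^ ((1:ℝ)/k) :=
          Real.rpow_le_rpow (Nat.cast_nonneg N) hNt (by positivity)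
        rw [htk] at hNk
        calc A * ((N:ℝ) ^ ((1:ℝ)/k)) * x ≤ A * (2 * A * x)⁻¹ * x := by
              have := mul_le_mul_of_nonneg_left hNk hA.le
              exact mul_le_mul_of_nonneg_right this (by positivity)
          _ = 1/2 := by field_simp
      have step1 : ‖f z‖ ≤ (1/2 : ℝ) ^ N := by
        calc ‖f z‖ ≤ A ^ N * (N.factorial : ℝ) ^ ((1:ℝ)/k) * x ^ N := hG1
          _ ≤ A ^ N * ((N:ℝ) ^ ((1:ℝ)/k)) ^ N * x ^ N := by gcongr
          _ = (A * ((N:ℝ) ^ ((1:ℝ)/k)) * x) ^ N := by rw [mul_pow, mul_pow]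
          _ ≤ (1/2 : ℝ) ^ N := pow_le_pow_left₀ (by positivity) hbase N
      have hBx : B * x ^ (-k:ℝ) = Real.log 2 * t := by
        rw [hBdef, htdef, Real.mul_rpow (by positivity) hz0.le, mul_assoc]
      have step2 : (1/2 : ℝ) ^ N ≤ 2 * Real.exp (-(B * x ^ (-k:ℝ))) := by
        have e1 : (1/2 : ℝ) ^ N = (2:ℝ) ^ (-(N:ℝ)) := by
          rw [Real.rpow_neg (by norm_num), Real.rpow_natCast, one_div, inv_pow]
        have e2 : Real.exp (-(B * x ^ (-k:ℝ))) = (2:ℝ) ^ (-t) := by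
          rw [hBx, Real.rpow_def_of_pos (by norm_num : (0:ℝ) < 2)]
          ring_nf
        rw [e1, e2, show (2:ℝ) * (2:ℝ) ^ (-t) = (2:ℝ) ^ (1 + -t) by
          rw [Real.rpow_add (by norm_num), Real.rpow_one]]
        exact (Real.rpow_le_rpow_left_iff (by norm_num)).mpr (by linarith)
      calc ‖f z‖ ≤ 2 * Real.exp (-(B * x ^ (-k:ℝ))) := step1.trans step2
        _ ≤ max 2 (max M 1 * Real.exp (B * c₂ ^ (-k:ℝ))) * Real.exp (-B * x ^ (-k:ℝ)) := by
            rw [neg_mul]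
            exact mul_le_mul_of_nonneg_right (le_max_left _ _) (Real.exp_pos _).le
    · -- |z| bounded below : use compactness bound
      have hMz : ‖f z‖ ≤ M := hM z hz hcase.le
      have e1 : Real.exp (-(B * c₂ ^ (-k:ℝ))) ≤ Real.exp (-B * x ^ (-k:ℝ)) := by
        rw [neg_mul]
        apply Real.exp_le_exp.mpr
        apply neg_le_neg
        exact mul_le_mul_of_nonneg_left
          (Real.rpow_le_rpow_of_nonpos hc₂ hcase.le (by linarith)) hB.le
      calc ‖f z‖ ≤ M := hMz
        _ ≤ max M 1 := le_max_left _ _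
        _ = (max M 1 * Real.exp (B * c₂ ^ (-k:ℝ))) * Real.exp (-(B * c₂ ^ (-k:ℝ))) := by
            rw [mul_assoc, ← Real.exp_add, add_neg_cancel, Real.exp_zero, mul_one]
        _ ≤ max 2 (max M 1 * Real.exp (B * c₂ ^ (-k:ℝ))) * Real.exp (-B * x ^ (-k:ℝ)) :=
            mul_le_mul (le_max_right _ _) e1 (Real.exp_pos _).le (by positivity)
  · -- exponential decay ⇒ Gevrey flat
    intro h a' b' ρ' haa hab' hbb hρ' hρρ
    obtain ⟨A, B, hA, hB, hD⟩ := h a' b' ρ' haa hab' hbb hρ' hρρ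
    set q : ℝ := ((k * B)⁻¹) ^ ((1:ℝ)/k) with hqdef
    have hq0 : 0 < q := Real.rpow_pos_of_pos (by positivity) _
    refine ⟨max 1 A * max 1 q, ρ', by positivity, hρ', ?_⟩
    intro N hN1 z hz hzρ
    obtain ⟨hz0, _⟩ := sub_abs hz
    have hD1 := hD z hz
    set x := ‖z‖ with hx
    set t : ℝ := x ^ (-k:ℝ) with htdef
    have ht0 : 0 < t := Real.rpow_pos_of_pos hz0 _
    have hN0 : (0:ℝ) < (N:ℝ) := by exact_mod_cast hN1
    set s : ℝ := (N:ℝ)/k with hsdef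
    have hs0 : 0 < s := by positivity
    have key := rpow_mul_exp_le t s B ht0 hs0 hB
    have hts : 0 < t ^ s := Real.rpow_pos_of_pos ht0 s
    have hexp : Real.exp (-B * t) ≤ (s/(Real.exp 1 * B)) ^ s * t ^ (-s) := by
      rw [Real.rpow_neg ht0.le, ← div_eq_mul_inv]
      rw [le_div_iff₀ hts, mul_comm]
      exact key
    have h1 : t ^ (-s) = x ^ N := by
      rw [htdef, ← Real.rpow_natCast x N, ← Real.rpow_mul hz0.le]
      congr 1
      rw [hsdef]
      field_simp
    have h2 : (s/(Real.exp 1 * B)) ^ s = ((N:ℝ)/Real.exp 1) ^ s * ((k*B)⁻¹) ^ s := by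
      rw [← Real.mul_rpow (by positivity) (by positivity)]
      congr 1
      rw [hsdef, mul_inv, div_div]
      ring
    have h3 : ((N:ℝ)/Real.exp 1) ^ s ≤ (N.factorial : ℝ) ^ ((1:ℝ)/k) := by
      calc ((N:ℝ)/Real.exp 1) ^ s = (((N:ℝ)/Real.exp 1) ^ N) ^ ((1:ℝ)/k) := by
            rw [← Real.rpow_natCast ((N:ℝ)/Real.exp 1) N, ← Real.rpow_mul (by positivity)]
            congr 1
            rw [hsdef]
            field_simp
        _ ≤ (N.factorial : ℝ) ^ ((1:ℝ)/k) :=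
            Real.rpow_le_rpow (by positivity) (pow_div_exp_le_factorial N) (by positivity)
    have h4 : ((k*B)⁻¹) ^ s = q ^ N := by
      rw [hqdef, ← Real.rpow_natCast (((k * B)⁻¹) ^ ((1:ℝ)/k)) N,
        ← Real.rpow_mul (by positivity)]
      congr 1
      rw [hsdef]
      field_simp
    have h5 : A * q ^ N ≤ (max 1 A * max 1 q) ^ N := by
      rw [mul_pow]
      have hA' : A ≤ (max 1 A) ^ N :=
        (le_max_right 1 A).trans (le_self_pow₀ (le_max_left 1 A) (by omega))
      have hq' : q ^ N ≤ (max 1 q) ^ N := pow_le_pow_left₀ hq0.le (le_max_right 1 q) N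
      exact mul_le_mul hA' hq' (by positivity) (by positivity)
    calc ‖f z‖ ≤ A * Real.exp (-B * t) := hD1
      _ ≤ A * ((s/(Real.exp 1 * B)) ^ s * t ^ (-s)) := by gcongr
      _ = (A * q ^ N) * ((N:ℝ)/Real.exp 1) ^ s * x ^ N := by rw [h2, h1, ← h4]; ring
      _ ≤ (max 1 A * max 1 q) ^ N * (N.factorial : ℝ) ^ ((1:ℝ)/k) * x ^ N := by
          gcongr
end

section
/- Define f : (0,∞) → ℝ by f(x) = ∫₀^∞ e^{−ζ/x}/(1+ζ) dζ. Then f is differentiable on (0,∞), satisfies the Euler equation x²·f′(x) + f(x) = x for all x > 0, and has the divergent series ∑_{n≥0} (−1)ⁿ·n!·x^{n+1} as asymptotic expansion at 0⁺: for every N ≥ 0 there is a constant C_N with |f(x) − ∑_{n≤N−1} (−1)ⁿ·n!·x^{n+1}| ≤ C_N·x^{N+1} for all 0 < x ≤ 1. -/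
open MeasureTheory

section EulerAux
open Real Set

lemma aux_int_pow (n : ℕ) {b : ℝ} (hb : 0 < b) :
    IntegrableOn (fun ζ : ℝ => ζ ^ n * Real.exp (-(b * ζ))) (Ioi 0) := by
  have h := integrableOn_rpow_mul_exp_neg_mul_rpow (p := 1) (s := n) (b := b)
    (lt_of_lt_of_le neg_one_lt_zero (Nat.cast_nonneg n)) zero_lt_one hb
  simpa [Real.rpow_natCast, Real.rpow_one, neg_mul] using h

lemma aux_eval_pow (n : ℕ) {b : ℝ} (hb : 0 < b) :
    ∫ ζ in Ioi (0:ℝ), ζ ^ n * Real.exp (-(b * ζ)) = n.factorial * (1/b) ^ (n+1) := by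
  have h := Real.integral_rpow_mul_exp_neg_mul_Ioi (a := (n+1:ℝ)) (r := b)
    (by positivity) hb
  rw [show ((n:ℝ)+1) - 1 = (n:ℝ) by ring] at h
  rw [Real.Gamma_nat_eq_factorial] at h
  calc ∫ ζ in Ioi (0:ℝ), ζ ^ n * Real.exp (-(b * ζ))
      = ∫ ζ in Ioi (0:ℝ), ζ ^ (n:ℝ) * Real.exp (-(b * ζ)) := by
        refine setIntegral_congr_fun measurableSet_Ioi fun ζ hζ => ?_
        rw [Real.rpow_natCast]
    _ = (1/b) ^ ((n:ℝ)+1) * n.factorial := h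
    _ = n.factorial * (1/b) ^ (n+1) := by
        rw [show ((n:ℝ)+1) = ((n+1 : ℕ):ℝ) by push_cast; ring, Real.rpow_natCast]
        ring

lemma aux_int_frac (n : ℕ) {b : ℝ} (hb : 0 < b) :
    IntegrableOn (fun ζ : ℝ => ζ ^ n * Real.exp (-(b * ζ)) / (1 + ζ)) (Ioi 0) := by
  refine Integrable.mono' (aux_int_pow n hb) ?_ ?_
  · refine ContinuousOn.aestronglyMeasurable ?_ measurableSet_Ioi
    intro ζ hζ
    have h1 : (1:ℝ) + ζ ≠ 0 := by have := mem_Ioi.mp hζ; positivity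
    exact ((continuousAt_pow _ _).mul
      ((Real.continuous_exp.comp (by fun_prop)).continuousAt)).continuousWithinAt.div
      (continuous_const.add continuous_id).continuousWithinAt h1
  · filter_upwards [ae_restrict_mem measurableSet_Ioi] with ζ hζ
    have hζ0 : (0:ℝ) < ζ := hζ
    have h1 : (1:ℝ) ≤ 1 + ζ := by linarith
    rw [Real.norm_eq_abs, abs_div, abs_of_nonneg (by positivity), abs_of_nonneg (by positivity)]
    calc ζ ^ n * Real.exp (-(b * ζ)) / (1 + ζ) ≤ ζ ^ n * Real.exp (-(b * ζ)) / 1 := by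
          gcongr
      _ = ζ ^ n * Real.exp (-(b * ζ)) := div_one _

lemma aux_hasDeriv {x : ℝ} (hx : 0 < x) :
    HasDerivAt (fun y => ∫ ζ in Ioi (0:ℝ), Real.exp (-ζ / y) / (1 + ζ))
      (∫ ζ in Ioi (0:ℝ), Real.exp (-ζ / x) * (ζ / x ^ 2) / (1 + ζ)) x := by
  have h2x : (0:ℝ) < 1 / (2 * x) := by positivity
  have H := hasDerivAt_integral_of_dominated_loc_of_deriv_le
    (μ := volume.restrict (Ioi (0:ℝ))) (x₀ := x)
    (F := fun y ζ => Real.exp (-ζ / y) / (1 + ζ))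
    (F' := fun y ζ => Real.exp (-ζ / y) * (ζ / y ^ 2) / (1 + ζ))
    (bound := fun ζ => Real.exp (-(1 / (2 * x) * ζ)) * (ζ / (x / 2) ^ 2) / 1)
    (s := Metric.ball x (x / 2)) (Metric.ball_mem_nhds x (by positivity))
    ?_ ?_ ?_ ?_ ?_ ?_
  · exact H.2
  · -- measurability of F y
    refine Filter.Eventually.of_forall fun y => ?_
    refine ContinuousOn.aestronglyMeasurable ?_ measurableSet_Ioi
    intro ζ hζ
    have h1 : (1:ℝ) + ζ ≠ 0 := by have := mem_Ioi.mp hζ; positivity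
    exact ((Real.continuous_exp.comp (by fun_prop)).continuousAt).continuousWithinAt.div
      (continuous_const.add continuous_id).continuousWithinAt h1
  · -- integrability of F x
    have := aux_int_frac 0 (b := 1/x) (by positivity)
    refine this.congr_fun (fun ζ hζ => ?_) measurableSet_Ioi
    beta_reduce; rw [pow_zero, one_mul, show -(1/x * ζ) = -ζ / x by ring]
  · -- measurability of F' x
    refine ContinuousOn.aestronglyMeasurable ?_ measurableSet_Ioi
    intro ζ hζ
    have h1 : (1:ℝ) + ζ ≠ 0 := by have := mem_Ioi.mp hζ; positivity
    exact (((Real.continuous_exp.comp (by fun_prop)).mul (by fun_prop)).continuousAt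
      ).continuousWithinAt.div (continuous_const.add continuous_id).continuousWithinAt h1
  · -- bound
    filter_upwards [ae_restrict_mem measurableSet_Ioi] with ζ hζ
    intro y hy
    have hζ0 : (0:ℝ) < ζ := hζ
    rw [Metric.mem_ball, Real.dist_eq, abs_lt] at hy
    have hy1 : x / 2 < y := by linarith
    have hy2 : y < 2 * x := by linarith
    have hy0 : (0:ℝ) < y := by linarith
    have h1 : (1:ℝ) ≤ 1 + ζ := by linarith
    rw [Real.norm_eq_abs, abs_div, abs_of_nonneg (by positivity), abs_of_nonneg (by positivity)]
    have hexp : Real.exp (-ζ / y) ≤ Real.exp (-(1 / (2 * x) * ζ)) := by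
      apply Real.exp_le_exp.mpr
      rw [neg_div, neg_le_neg_iff, le_div_iff₀ hy0]
      rw [div_mul_eq_mul_div, div_mul_eq_mul_div, div_le_iff₀ (by positivity : (0:ℝ) < 2*x)]
      nlinarith
    gcongr

  · -- integrability of bound
    have h2 : IntegrableOn (fun ζ : ℝ => 1 / (x/2)^2 * (ζ ^ 1 * Real.exp (-(1/(2*x) * ζ))))
        (Ioi 0) := (aux_int_pow 1 (b := 1/(2*x)) h2x).const_mul (1 / (x/2)^2)
    refine h2.congr_fun (fun ζ hζ => ?_) measurableSet_Ioi
    beta_reduce; rw [pow_one]; ring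
  · -- differentiability
    refine Filter.Eventually.of_forall fun ζ => ?_
    intro y hy
    rw [Metric.mem_ball, Real.dist_eq, abs_lt] at hy
    have hy0 : (0:ℝ) < y := by linarith
    have h1 : HasDerivAt (fun y : ℝ => -ζ / y) (ζ / y ^ 2) y := by
      have h0 : (fun y : ℝ => -ζ / y) = fun y : ℝ => -ζ * y⁻¹ := by funext t; ring
      rw [h0, show ζ / y ^ 2 = -ζ * -(y ^ 2)⁻¹ by ring]
      exact (hasDerivAt_inv hy0.ne').const_mul (-ζ)
    exact (h1.exp).div_const (1 + ζ)

end EulerAux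

/-- The Borel–Laplace sum `f(x) = ∫₀^∞ e^{−ζ/x}/(1+ζ) dζ` is differentiable on
`(0,∞)`, satisfies the Euler equation `x²f′(x) + f(x) = x` there, and has the
divergent series `∑ (−1)ⁿ n! x^{n+1}` as asymptotic expansion at `0⁺`. -/
theorem euler_equation_borel_sum
    (f : ℝ → ℝ)
    (hf : ∀ x : ℝ, f x = ∫ ζ in Set.Ioi (0 : ℝ), Real.exp (-ζ / x) / (1 + ζ)) :
    (∀ x : ℝ, 0 < x → DifferentiableAt ℝ f x) ∧
    (∀ x : ℝ, 0 < x → x ^ 2 * deriv f x + f x = x) ∧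
    (∀ N : ℕ, ∃ C : ℝ, ∀ x : ℝ, 0 < x → x ≤ 1 →
      |f x - ∑ n ∈ Finset.range N, (-1 : ℝ) ^ n * (n.factorial : ℝ) * x ^ (n + 1)| ≤
        C * x ^ (N + 1)) := by
  have hfe : f = fun y => ∫ ζ in Set.Ioi (0:ℝ), Real.exp (-ζ / y) / (1 + ζ) := funext hf
  refine ⟨?_, ?_, ?_⟩
  · intro x hx
    rw [hfe]
    exact (aux_hasDeriv hx).differentiableAt
  · intro x hx
    have hbx : (0:ℝ) < 1/x := by positivity
    have hD : deriv f x = ∫ ζ in Set.Ioi (0:ℝ), Real.exp (-ζ/x) * (ζ/x^2) / (1+ζ) := by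
      rw [hfe]; exact (aux_hasDeriv hx).deriv
    rw [hD, hf x]
    have I1 : IntegrableOn (fun ζ : ℝ => Real.exp (-ζ/x) * ζ / (1+ζ)) (Set.Ioi 0) := by
      refine (aux_int_frac 1 hbx).congr_fun (fun ζ hζ => ?_) measurableSet_Ioi
      beta_reduce; rw [pow_one, show -(1/x*ζ) = -ζ/x by ring]; ring
    have I0 : IntegrableOn (fun ζ : ℝ => Real.exp (-ζ/x) / (1+ζ)) (Set.Ioi 0) := by
      refine (aux_int_frac 0 hbx).congr_fun (fun ζ hζ => ?_) measurableSet_Ioi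
      beta_reduce; rw [pow_zero, one_mul, show -(1/x*ζ) = -ζ/x by ring]
    have step1 : x^2 * ∫ ζ in Set.Ioi (0:ℝ), Real.exp (-ζ/x) * (ζ/x^2) / (1+ζ)
        = ∫ ζ in Set.Ioi (0:ℝ), Real.exp (-ζ/x) * ζ / (1+ζ) := by
      rw [← integral_const_mul]
      refine setIntegral_congr_fun measurableSet_Ioi fun ζ hζ => ?_
      field_simp
    rw [step1, ← integral_add I1 I0]
    have step2 : (∫ ζ in Set.Ioi (0:ℝ),
          (Real.exp (-ζ/x) * ζ / (1+ζ) + Real.exp (-ζ/x)/(1+ζ)))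
        = ∫ ζ in Set.Ioi (0:ℝ), ζ^0 * Real.exp (-(1/x * ζ)) := by
      refine setIntegral_congr_fun measurableSet_Ioi fun ζ hζ => ?_
      have hζ0 := Set.mem_Ioi.mp hζ
      have h1 : (1:ℝ)+ζ ≠ 0 := by positivity
      rw [pow_zero, one_mul, show -(1/x*ζ) = -ζ/x by ring]
      field_simp
      ring
    rw [step2, aux_eval_pow 0 hbx]
    rw [one_div_one_div]
    norm_num
  · intro N
    refine ⟨N.factorial, fun x hx hx1 => ?_⟩
    have hbx : (0:ℝ) < 1/x := by positivity
    have hxx : (1:ℝ)/(1/x) = x := one_div_one_div x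
    set E : ℝ → ℝ := fun ζ => Real.exp (-(1/x * ζ)) with hE
    have hfx : f x = ∫ ζ in Set.Ioi (0:ℝ), E ζ / (1+ζ) := by
      rw [hf x]
      refine setIntegral_congr_fun measurableSet_Ioi fun ζ hζ => ?_
      rw [show -ζ/x = -(1/x*ζ) by ring]
    have IA : IntegrableOn (fun ζ : ℝ => E ζ / (1+ζ)) (Set.Ioi 0) := by
      refine (aux_int_frac 0 hbx).congr_fun (fun ζ hζ => ?_) measurableSet_Ioi
      beta_reduce; rw [pow_zero, one_mul]
    have IB : IntegrableOn
        (fun ζ : ℝ => ∑ n ∈ Finset.range N, (-1:ℝ)^n * (ζ^n * E ζ)) (Set.Ioi 0) := by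
      apply integrable_finset_sum
      intro n _
      exact (aux_int_pow n hbx).const_mul _
    have hterm : ∀ n : ℕ, (∫ ζ in Set.Ioi (0:ℝ), (-1:ℝ)^n * (ζ^n * E ζ))
        = (-1:ℝ)^n * n.factorial * x^(n+1) := by
      intro n
      rw [integral_const_mul, aux_eval_pow n hbx, hxx]
      ring
    have hsum : ∑ n ∈ Finset.range N, (-1:ℝ)^n * (n.factorial : ℝ) * x^(n+1)
        = ∫ ζ in Set.Ioi (0:ℝ), ∑ n ∈ Finset.range N, (-1:ℝ)^n * (ζ^n * E ζ) := by
      rw [integral_finset_sum _ (fun n _ => (aux_int_pow n hbx).const_mul _)]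
      exact (Finset.sum_congr rfl fun n _ => (hterm n).symm)
    have hdiff : f x - ∑ n ∈ Finset.range N, (-1:ℝ)^n * (n.factorial : ℝ) * x^(n+1)
        = ∫ ζ in Set.Ioi (0:ℝ), ((-1:ℝ)^N * ζ^N * E ζ / (1+ζ)) := by
      rw [hfx, hsum, ← integral_sub IA IB]
      refine setIntegral_congr_fun measurableSet_Ioi fun ζ hζ => ?_
      have hζ0 := Set.mem_Ioi.mp hζ
      have h1 : (1:ℝ)+ζ ≠ 0 := by positivity
      have hs : ∑ n ∈ Finset.range N, (-1:ℝ)^n * (ζ^n * E ζ)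
          = (∑ n ∈ Finset.range N, (-ζ)^n) * E ζ := by
        rw [Finset.sum_mul]
        refine Finset.sum_congr rfl fun n _ => ?_
        rw [neg_pow]; ring
      rw [hs]
      have hgeo := geom_sum_mul (-ζ) N
      field_simp
      linear_combination (E ζ) * hgeo
    rw [hdiff]
    calc |∫ ζ in Set.Ioi (0:ℝ), ((-1:ℝ)^N * ζ^N * E ζ / (1+ζ))|
        = ‖∫ ζ in Set.Ioi (0:ℝ), ((-1:ℝ)^N * ζ^N * E ζ / (1+ζ))‖ :=
          (Real.norm_eq_abs _).symm
      _ ≤ ∫ ζ in Set.Ioi (0:ℝ), ‖(-1:ℝ)^N * ζ^N * E ζ / (1+ζ)‖ :=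
          norm_integral_le_integral_norm _
      _ ≤ ∫ ζ in Set.Ioi (0:ℝ), ζ^N * E ζ := by
          have IG : IntegrableOn (fun ζ : ℝ => (-1:ℝ)^N * ζ^N * E ζ / (1+ζ)) (Set.Ioi 0) := by
            have h3 : IntegrableOn
                (fun ζ : ℝ => (-1:ℝ)^N * (ζ^N * Real.exp (-(1/x * ζ)) / (1+ζ))) (Set.Ioi 0) :=
              (aux_int_frac N hbx).const_mul ((-1:ℝ)^N)
            refine h3.congr_fun (fun ζ hζ => ?_) measurableSet_Ioi
            beta_reduce; rw [hE]; ring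
          refine setIntegral_mono_on IG.norm (aux_int_pow N hbx) measurableSet_Ioi
            fun ζ hζ => ?_
          have hζ0 := Set.mem_Ioi.mp hζ
          have h1 : (1:ℝ) ≤ 1 + ζ := by linarith
          simp only [hE, Real.norm_eq_abs, abs_div, abs_mul, abs_pow, abs_neg, abs_one,
            one_pow, one_mul, abs_of_nonneg hζ0.le, Real.abs_exp,
            abs_of_nonneg (show (0:ℝ) ≤ 1+ζ by positivity)]
          have h5 : ζ^N * Real.exp (-(1/x*ζ)) / (1+ζ) ≤ ζ^N * Real.exp (-(1/x*ζ)) / 1 := by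
            gcongr
          simpa using h5
      _ = N.factorial * x^(N+1) := by
          rw [aux_eval_pow N hbx]
          rw [hxx]
end

section
/- The function sec = 1/cos does not satisfy any nonzero homogeneous linear differential equation with rational function coefficients: there do not exist n ≥ 0 and polynomials a₀, …, aₙ ∈ ℂ[x] with aₙ ≠ 0 such that ∑_{i=0}^{n} aᵢ(z)·(d^i/dz^i)(1/cos)(z) = 0 for all z in the open unit disk {z ∈ ℂ : |z| < 1}. -/
open Complex Polynomial Finset

/-- Auxiliary entire functions: `secQ i = cos ^ (i+1) * (d/dz)^i (1/cos)` on `{cos ≠ 0}`. -/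
noncomputable def secQ : ℕ → ℂ → ℂ
  | 0 => fun _ => 1
  | (i + 1) => fun z =>
      Complex.cos z * deriv (secQ i) z + (i + 1) * Complex.sin z * secQ i z

lemma differentiable_deriv_of_differentiable {f : ℂ → ℂ} (hf : Differentiable ℂ f) :
    Differentiable ℂ (deriv f) := by
  have h : AnalyticOnNhd ℂ f Set.univ := by
    intro z _; exact hf.analyticAt z
  have := h.deriv
  exact fun z => ((this z (Set.mem_univ z)).differentiableAt)

lemma secQ_differentiable (i : ℕ) : Differentiable ℂ (secQ i) := by
  induction i with
  | zero => exact differentiable_const 1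
  | succ i ih =>
      show Differentiable ℂ fun z =>
        Complex.cos z * deriv (secQ i) z + ((i : ℂ) + 1) * Complex.sin z * secQ i z
      exact (Complex.differentiable_cos.mul
        (differentiable_deriv_of_differentiable ih)).add
        (((differentiable_const _).mul Complex.differentiable_sin).mul ih)

lemma secQ_spec (i : ℕ) :
    ∀ z : ℂ, Complex.cos z ≠ 0 →
      iteratedDeriv i (fun w => 1 / Complex.cos w) z = secQ i z / Complex.cos z ^ (i + 1) := by
  induction i with
  | zero =>
      intro z hz
      simp [secQ, iteratedDeriv_zero]
  | succ i ih =>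
      intro z hz
      rw [iteratedDeriv_succ]
      have hopen : IsOpen {w : ℂ | Complex.cos w ≠ 0} :=
        isOpen_compl_iff.mpr (isClosed_eq Complex.continuous_cos continuous_const)
      have hev : (iteratedDeriv i (fun w => 1 / Complex.cos w)) =ᶠ[nhds z]
          fun w => secQ i w / Complex.cos w ^ (i + 1) := by
        filter_upwards [hopen.mem_nhds hz] with w hw
        exact ih w hw
      rw [hev.deriv_eq]
      have hQ : DifferentiableAt ℂ (secQ i) z := (secQ_differentiable i) z
      have hpow : HasDerivAt (fun w => Complex.cos w ^ (i + 1))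
          (((i : ℂ) + 1) * Complex.cos z ^ i * (-Complex.sin z)) z := by
        have := (Complex.hasDerivAt_cos z).fun_pow (i + 1)
        simpa using this
      have hden : Complex.cos z ^ (i + 1) ≠ 0 := pow_ne_zero _ hz
      rw [deriv_fun_div hQ hpow.differentiableAt hden, hpow.deriv]
      show _ = secQ (i + 1) z / Complex.cos z ^ (i + 1 + 1)
      show _ = (Complex.cos z * deriv (secQ i) z
          + ((i : ℂ) + 1) * Complex.sin z * secQ i z) / Complex.cos z ^ (i + 1 + 1)
      field_simp
      ring

lemma secQ_of_cos_eq_zero (i : ℕ) {z : ℂ} (hz : Complex.cos z = 0) :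
    secQ i z = (i.factorial : ℂ) * Complex.sin z ^ i := by
  induction i with
  | zero => simp [secQ]
  | succ i ih =>
      show Complex.cos z * deriv (secQ i) z + ((i : ℂ) + 1) * Complex.sin z * secQ i z = _
      rw [hz, ih]
      push_cast [Nat.factorial_succ]
      ring

lemma cos_ne_zero_of_abs_lt_one {z : ℂ} (hz : ‖z‖ < 1) : Complex.cos z ≠ 0 := by
  intro h
  obtain ⟨k, rfl⟩ := Complex.cos_eq_zero_iff.mp h
  have hπ : (2 : ℝ) < Real.pi := by have := Real.pi_gt_three; linarith
  have habs : ‖((2 * (k : ℂ) + 1) * (Real.pi : ℂ) / 2)‖ =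
      |(2 * (k : ℝ) + 1)| * Real.pi / 2 := by
    have : ((2 * (k : ℂ) + 1) * (Real.pi : ℂ) / 2) = (((2 * (k : ℝ) + 1) * Real.pi / 2 : ℝ) : ℂ) := by
      push_cast; ring
    rw [this, Complex.norm_real, Real.norm_eq_abs, abs_div, abs_mul]
    rw [abs_of_pos Real.pi_pos, abs_of_pos (by norm_num : (0:ℝ) < 2)]
  have hk : (1 : ℝ) ≤ |(2 * (k : ℝ) + 1)| := by
    have : (2 * (k : ℝ) + 1) = ((2 * k + 1 : ℤ) : ℝ) := by push_cast; ring
    rw [this, ← Int.cast_abs]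
    have : (1 : ℤ) ≤ |2 * k + 1| := Int.one_le_abs (by omega)
    exact_mod_cast this
  have : (1 : ℝ) ≤ ‖((2 * (k : ℂ) + 1) * (Real.pi : ℂ) / 2)‖ := by
    rw [habs]
    calc (1 : ℝ) = 1 * 2 / 2 := by norm_num
    _ ≤ |(2 * (k : ℝ) + 1)| * Real.pi / 2 := by
        apply div_le_div_of_nonneg_right _ (by norm_num)
        exact mul_le_mul hk hπ.le (by norm_num) (le_trans (by norm_num) hk)
  linarith

/-- `sec = 1/cos` satisfies no nonzero homogeneous linear differential equation with
polynomial (equivalently, rational function) coefficients on the open unit disk. -/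
theorem sec_satisfies_no_linear_ode :
    ¬ ∃ (n : ℕ) (a : ℕ → Polynomial ℂ), a n ≠ 0 ∧
      ∀ z : ℂ, ‖z‖ < 1 →
        ∑ i ∈ Finset.range (n + 1),
          (a i).eval z * iteratedDeriv i (fun w => 1 / Complex.cos w) z = 0 := by
  rintro ⟨n, a, han, hsum⟩
  set G : ℂ → ℂ := fun z =>
    ∑ i ∈ Finset.range (n + 1), (a i).eval z * Complex.cos z ^ (n - i) * secQ i z with hG
  have hGdiff : Differentiable ℂ G := by
    apply Differentiable.fun_sum
    intro i _
    exact (((a i).differentiable).mul (Complex.differentiable_cos.pow _)).mul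
      (secQ_differentiable i)
  -- G vanishes on the unit ball
  have hGball : ∀ z : ℂ, ‖z‖ < 1 → G z = 0 := by
    intro z hz
    have hc : Complex.cos z ≠ 0 := cos_ne_zero_of_abs_lt_one hz
    have : G z = Complex.cos z ^ (n + 1) *
        ∑ i ∈ Finset.range (n + 1),
          (a i).eval z * iteratedDeriv i (fun w => 1 / Complex.cos w) z := by
      rw [hG, Finset.mul_sum]
      apply Finset.sum_congr rfl
      intro i hi
      have hin : i ≤ n := Nat.lt_succ_iff.mp (Finset.mem_range.mp hi)
      rw [secQ_spec i z hc]
      have hpow : Complex.cos z ^ (n - i) * Complex.cos z ^ (i + 1)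
          = Complex.cos z ^ (n + 1) := by
        rw [← pow_add]; congr 1; omega
      field_simp
      rw [← hpow]
      ring
    rw [this, hsum z hz, mul_zero]
  -- G is entire and vanishes on an open set, hence vanishes everywhere
  have hGzero : ∀ z : ℂ, G z = 0 := by
    have hA : AnalyticOnNhd ℂ G Set.univ := fun z _ => hGdiff.analyticAt z
    have hev : G =ᶠ[nhds 0] 0 := by
      filter_upwards [Metric.ball_mem_nhds (0 : ℂ) one_pos] with w hw
      exact hGball w (by simpa [Complex.dist_eq] using hw)
    intro z
    exact hA.eqOn_zero_of_preconnected_of_eventuallyEq_zero isPreconnected_univ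
      (Set.mem_univ 0) hev (Set.mem_univ z)
  -- hence a n has infinitely many roots
  have hroot : ∀ k : ℕ, (a n).IsRoot ((2 * (k : ℂ) + 1) * (Real.pi : ℂ) / 2) := by
    intro k
    set z : ℂ := (2 * (k : ℂ) + 1) * (Real.pi : ℂ) / 2 with hzdef
    have hcz : Complex.cos z = 0 := Complex.cos_eq_zero_iff.mpr ⟨(k : ℤ), by push_cast; ring⟩
    have hsz : Complex.sin z ≠ 0 := by
      intro h
      have := Complex.sin_sq_add_cos_sq z
      rw [h, hcz] at this
      simp at this
    have h0 := hGzero z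
    rw [hG] at h0
    simp only [Finset.sum_range_succ] at h0
    have hrest : ∑ i ∈ Finset.range n,
        (a i).eval z * Complex.cos z ^ (n - i) * secQ i z = 0 := by
      apply Finset.sum_eq_zero
      intro i hi
      have : n - i ≠ 0 := by
        have := Finset.mem_range.mp hi; omega
      rw [hcz, zero_pow this, mul_zero, zero_mul]
    rw [hrest, zero_add, Nat.sub_self, pow_zero, mul_one,
      secQ_of_cos_eq_zero n hcz] at h0
    have hne : (n.factorial : ℂ) * Complex.sin z ^ n ≠ 0 :=
      mul_ne_zero (Nat.cast_ne_zero.mpr n.factorial_ne_zero) (pow_ne_zero _ hsz)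
    exact (mul_eq_zero.mp h0).resolve_right hne
  apply han
  apply Polynomial.eq_zero_of_infinite_isRoot
  apply Set.infinite_of_injective_forall_mem
    (f := fun k : ℕ => (2 * (k : ℂ) + 1) * (Real.pi : ℂ) / 2)
  case hi =>
    intro k k' hkk
    have hπ : (Real.pi : ℂ) ≠ 0 := Complex.ofReal_ne_zero.mpr Real.pi_ne_zero
    beta_reduce at hkk
    have h1 : (2 * (k : ℂ) + 1) * (Real.pi : ℂ) = (2 * (k' : ℂ) + 1) * (Real.pi : ℂ) := by
      linear_combination 2 * hkk
    have h2 := mul_right_cancel₀ hπ h1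
    have h3 : (k : ℂ) = k' := by linear_combination h2 / 2
    exact_mod_cast h3
  case hf =>
    intro k
    exact hroot k
end
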